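/- arXiv:1910.11023 — 11 statements merged into one kernel-verified Lean document; each statement's English description precedes it below -/
import Mathlib

section
/- If A is a retract of an integral domain B (i.e., there is a ring homomorphism π: B → A with π restricting to the identity on A), then A is algebraically closed in B. -/
open Polynomial

/-- If `A` is a retract of an integral domain `B`, then `A` is algebraically
closed in `B`: every element of `B` algebraic over `A` lies in `A`. -/
theorem retract_algebraically_closed {B : Type*} [CommRing B] [IsDomain B]
    (A : Subring B) (π : B →+* A) (hπ : ∀ a : A, π (a : B) = a) :
    ∀ b : B, (∃ p : Polynomial A, p ≠ 0 ∧ Polynomial.aeval b p = 0) → b ∈ A := by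
  rintro b ⟨p, hp, hpb⟩
  let π' : B →ₐ[A] A := { π with commutes' := hπ }
  -- strong induction on natDegree of p
  have key : ∀ n (p : Polynomial A), p.natDegree ≤ n → p ≠ 0 →
      Polynomial.aeval b p = 0 → b ∈ A := by
    intro n
    induction n with
    | zero =>
      intro p hdeg hp0 hpb
      have : p = Polynomial.C (p.coeff 0) := Polynomial.eq_C_of_natDegree_le_zero hdeg
      rw [this] at hpb
      simp only [Polynomial.aeval_C] at hpb
      have : p.coeff 0 = 0 := by
        rw [show (algebraMap A B) = A.subtype from rfl] at hpb
        exact Subtype.ext hpb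
      exact absurd (by rw [‹p = _›, this, map_zero]) hp0
    | succ n ih =>
      intro p hdeg hp0 hpb
      -- π b is a root of p in A
      have hroot : Polynomial.eval (π b) p = 0 := by
        have : Polynomial.aeval (π' b) p = π' (Polynomial.aeval b p) :=
          (Polynomial.aeval_algHom_apply π' b p)
        rw [hpb, map_zero] at this
        rw [Polynomial.coe_aeval_eq_eval] at this
        exact this
      obtain ⟨q, hq⟩ := (Polynomial.dvd_iff_isRoot.mpr hroot)
      by_cases hq0 : q = 0
      · exact absurd (by rw [hq, hq0, mul_zero]) hp0
      have hfac : (b - (π b : B)) * Polynomial.aeval b q = 0 := by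
        have := congrArg (Polynomial.aeval b) hq
        rw [hpb, map_mul, map_sub, Polynomial.aeval_X, Polynomial.aeval_C] at this
        exact this.symm
      rcases mul_eq_zero.mp hfac with h | h
      · rw [sub_eq_zero.mp h]; exact (π b).2
      · apply ih q _ hq0 h
        have : p.natDegree = 1 + q.natDegree := by
          rw [hq, Polynomial.natDegree_mul (Polynomial.X_sub_C_ne_zero _) hq0,
            Polynomial.natDegree_X_sub_C]
        omega
  exact key p.natDegree p le_rfl hp hpb
end

section
/- If A is a retract of a unique factorization domain B, then A is a unique factorization domain. -/
/-- If `A` is a retract of a UFD `B`, then `A` is a UFD. -/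
theorem retract_ufd {B : Type*} [CommRing B] [IsDomain B]
    [UniqueFactorizationMonoid B]
    (A : Subring B) (π : B →+* B) (hidem : ∀ b, π (π b) = π b)
    (hrange : π.range = A) :
    UniqueFactorizationMonoid A := by
  -- π fixes A pointwise
  have hfix : ∀ a : A, π (a : B) = a := by
    intro a
    obtain ⟨b, hb⟩ : (a : B) ∈ π.range := by rw [hrange]; exact a.2
    rw [← hb, hidem, hb]
  have hmem : ∀ b : B, π b ∈ A := fun b => by
    rw [← hrange]; exact ⟨b, rfl⟩
  -- divisibility in B reflects to A
  have hdvd : ∀ a b : A, (a : B) ∣ (b : B) → a ∣ b := by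
    rintro a b ⟨c, hc⟩
    refine ⟨⟨π c, hmem c⟩, ?_⟩
    apply Subtype.ext
    push_cast
    calc (b : B) = π b := (hfix b).symm
    _ = π a * π c := by rw [hc, map_mul]
    _ = a * π c := by rw [hfix]
  have hunit : ∀ a : A, IsUnit (a : B) → IsUnit a := by
    intro a ha
    rw [isUnit_iff_dvd_one] at *
    exact hdvd a 1 (by simpa using ha)
  haveI : WfDvdMonoid A := ⟨by
    have wfB : WellFounded (DvdNotUnit : B → B → Prop) := wellFounded_dvdNotUnit
    refine Subrelation.wf ?_ (InvImage.wf (fun a : A => (a : B)) wfB)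
    rintro a b ⟨ha, x, hx, hbx⟩
    refine ⟨fun h => ha (Subtype.ext h), x, fun h => hx (hunit x h), ?_⟩
    show (b : B) = (a : B) * x
    exact_mod_cast hbx⟩
  refine { irreducible_iff_prime := fun {q} => ⟨?_, Prime.irreducible⟩ }
  intro hq
  have hq0 : (q : B) ≠ 0 := fun h => hq.ne_zero (by exact_mod_cast h)
  obtain ⟨f, hf, hassoc⟩ := UniqueFactorizationMonoid.exists_prime_factors (q : B) hq0
  obtain ⟨u, hu⟩ := hassoc
  -- there is a prime factor p of q with π p not a unit
  have hex : ∃ p ∈ f, ¬ IsUnit (π p) := by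
    by_contra h
    push_neg at h
    apply hq.not_isUnit
    apply hunit
    have : (q : B) = (f.map π).prod * π u := by
      rw [← hfix q, ← hu, map_mul, map_multiset_prod]
    rw [this]
    refine IsUnit.mul ?_ (u.isUnit.map π)
    have hall : ∀ (s : Multiset B), (∀ x ∈ s, IsUnit x) → IsUnit s.prod := fun s =>
      Multiset.induction_on s (by simp) (fun a s ih hh => by
        rw [Multiset.prod_cons]
        exact (hh a (Multiset.mem_cons_self a s)).mul
          (ih fun x hx => hh x (Multiset.mem_cons_of_mem hx)))
    refine hall _ ?_
    intro x hx
    obtain ⟨p, hp, rfl⟩ := Multiset.mem_map.mp hx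
    exact h p hp
  obtain ⟨p, hpf, hpnu⟩ := hex
  classical
  set f' := f.erase p with hf'
  have hcons : p ::ₘ f' = f := Multiset.cons_erase hpf
  -- q = π p * π (f'.prod * u) in A
  set p' : A := ⟨π p, hmem p⟩ with hp'
  set r' : A := ⟨π (f'.prod * u), hmem _⟩ with hr'
  have hq_eq : q = p' * r' := by
    apply Subtype.ext
    push_cast
    calc (q : B) = π q := (hfix q).symm
    _ = π (p * (f'.prod * u)) := by rw [← hu, ← hcons, Multiset.prod_cons, mul_assoc]
    _ = π p * π (f'.prod * u) := by rw [map_mul]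
  have hp'nu : ¬ IsUnit p' := fun h => hpnu (by simpa using h.map A.subtype)
  have hr'u : IsUnit r' := (hq.isUnit_or_isUnit hq_eq).resolve_left hp'nu
  have hqp' : q ∣ p' := by
    obtain ⟨v, hv⟩ := hr'u
    exact ⟨↑v⁻¹, by rw [hq_eq, ← hv, mul_assoc, Units.mul_inv, mul_one]⟩
  constructor
  · exact hq.ne_zero
  constructor
  · exact hq.not_isUnit
  · intro a b hab
    have hpq : p ∣ (q : B) := (Multiset.dvd_prod hpf).trans ⟨u, hu.symm⟩
    have hpab : p ∣ (a : B) * (b : B) := by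
      obtain ⟨c, hc⟩ := hab
      exact hpq.trans ⟨c, by exact_mod_cast hc⟩
    have hp := hf p hpf
    rcases hp.2.2 _ _ hpab with h | h
    · left
      obtain ⟨c, hc⟩ := h
      refine hqp'.trans (hdvd p' a ⟨π c, ?_⟩)
      calc (a : B) = π a := (hfix a).symm
      _ = π p * π c := by rw [hc, map_mul]
    · right
      obtain ⟨c, hc⟩ := h
      refine hqp'.trans (hdvd p' b ⟨π c, ?_⟩)
      calc (b : B) = π b := (hfix b).symm
      _ = π p * π c := by rw [hc, map_mul]
end

section
/- Let R be a ring, B an R-algebra and A an R-algebra retract of B. If B is a faithfully flat R-algebra, then A is a faithfully flat R-algebra. -/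
/-- If `B` is a faithfully flat `R`-algebra and `A` is an `R`-algebra retract
of `B`, then `A` is a faithfully flat `R`-algebra. -/
theorem retract_faithfullyFlat {R A B : Type*} [CommRing R] [CommRing A] [CommRing B]
    [Algebra R A] [Algebra R B] [Module.FaithfullyFlat R B]
    (ι : A →ₐ[R] B) (π : B →ₐ[R] A) (hπ : π.comp ι = AlgHom.id R A) :
    Module.FaithfullyFlat R A := by
  have hflat : Module.Flat R A :=
    Module.Flat.of_retract ι.toLinearMap π.toLinearMap (by
      ext x; exact congrArg (fun f => f x) (congrArg AlgHom.toLinearMap hπ))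
  refine ⟨fun m hm h => ?_⟩
  apply Module.FaithfullyFlat.submodule_ne_top (R := R) (M := B) hm
  rw [Ideal.smul_top_eq_map] at h ⊢
  have hA : Ideal.map (algebraMap R A) m = ⊤ := by
    apply_fun Submodule.restrictScalars R using Submodule.restrictScalars_injective R A A
    simpa using h
  have : Ideal.map (algebraMap R B) m = ⊤ := by
    rw [← Ideal.map_top (ι : A →+* B), ← hA, Ideal.map_map]
    congr 1
    exact (ι.comp_algebraMap).symm ▸ rfl
  rw [this]
  rfl
end

section
/- Let C be an integral domain and x, y nonzero elements of C. Then y is a regular element on C/xC (i.e., a non-zerodivisor on the quotient) if and only if C = C_x ∩ C_y, the intersection taken inside the field of fractions of C. -/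
/-- Let `C` be a domain and `x, y` nonzero.  Then `y` is `(C/xC)`-regular iff
`C = C_x ∩ C_y` inside the fraction field of `C`, where `C_x` consists of the
fractions `c / xⁿ`. -/
theorem regular_iff_intersection {C : Type*} [CommRing C] [IsDomain C]
    (x y : C) (hx : x ≠ 0) (hy : y ≠ 0) :
    (∀ c : C, y * c ∈ Ideal.span {x} → c ∈ Ideal.span {x}) ↔
      Set.range (algebraMap C (FractionRing C)) =
        {z : FractionRing C | ∃ (c : C) (n : ℕ),
            z = algebraMap C (FractionRing C) c / (algebraMap C (FractionRing C) x) ^ n} ∩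
        {z : FractionRing C | ∃ (c : C) (n : ℕ),
            z = algebraMap C (FractionRing C) c / (algebraMap C (FractionRing C) y) ^ n} := by
  set K := FractionRing C
  set f := algebraMap C K with hf
  have hinj : Function.Injective f := IsFractionRing.injective C K
  have hfx : f x ≠ 0 := fun h => hx (hinj (by simpa using h))
  have hfy : f y ≠ 0 := fun h => hy (hinj (by simpa using h))
  constructor
  · intro hreg
    have hreg' : ∀ (m : ℕ) (c : C), y ^ m * c ∈ Ideal.span {x} → c ∈ Ideal.span {x} := by
      intro m
      induction m with
      | zero => intro c h; simpa using h
      | succ m ih =>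
        intro c h
        rw [pow_succ] at h
        exact hreg c (ih (y * c) (by rw [← mul_assoc]; exact h))
    apply Set.eq_of_subset_of_subset
    · rintro z ⟨c, rfl⟩
      exact ⟨⟨c, 0, by simp⟩, ⟨c, 0, by simp⟩⟩
    · rintro z ⟨⟨a, n, ha⟩, ⟨b, m, hb⟩⟩
      have heq : a * y ^ m = b * x ^ n := by
        apply hinj
        have h1 : f a / f x ^ n = f b / f y ^ m := by rw [← ha, ← hb]
        rw [div_eq_div_iff (pow_ne_zero _ hfx) (pow_ne_zero _ hfy)] at h1
        simp only [map_mul, map_pow]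
        exact h1
      have key : ∀ (n : ℕ) (a b : C), a * y ^ m = b * x ^ n → ∃ e : C, a = e * x ^ n := by
        intro n
        induction n with
        | zero => intro a b h; exact ⟨a, by simp⟩
        | succ n ih =>
          intro a b h
          have hax : a ∈ Ideal.span {x} := by
            apply hreg' m
            rw [mul_comm]
            exact Ideal.mem_span_singleton.2 ⟨b * x ^ n, by rw [h, pow_succ]; ring⟩
          obtain ⟨a', ha'⟩ := Ideal.mem_span_singleton.1 hax
          obtain ⟨e, he⟩ := ih a' b (by
            apply mul_left_cancel₀ hx
            rw [ha'] at h
            rw [pow_succ] at h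
            linear_combination h)
          exact ⟨e, by rw [ha', he, pow_succ]; ring⟩
      obtain ⟨e, he⟩ := key n a b heq
      refine ⟨e, ?_⟩
      rw [ha, he, map_mul, map_pow, mul_div_assoc,
        div_self (pow_ne_zero _ hfx), mul_one]
  · intro hEq c hc
    obtain ⟨d, hd⟩ := Ideal.mem_span_singleton.1 hc
    have hz : f c / f x = f d / f y := by
      rw [div_eq_div_iff hfx hfy, ← map_mul, ← map_mul]
      exact congrArg f (by linear_combination hd)
    have hmem : f c / f x ∈ Set.range f := by
      rw [hEq]
      exact ⟨⟨c, 1, by rw [pow_one]⟩, ⟨d, 1, by rw [pow_one]; exact hz⟩⟩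
    obtain ⟨e, he⟩ := hmem
    refine Ideal.mem_span_singleton.2 ⟨e, ?_⟩
    apply hinj
    rw [map_mul]
    rw [eq_div_iff hfx] at he
    rw [← he]; ring
end

section
/- Let R be an integral domain, A a flat R-algebra which is an integral domain containing R, and r, x nonzero elements of R. Let I = rR_x ∩ R (intersection inside the fraction field of R). Then IA = rA_x ∩ A (intersection inside the fraction field of A). -/
open TensorProduct


/-- Let `R` be a domain, `A` a flat `R`-algebra which is a domain containing
`R`, `r, x` nonzero elements of `R` and `I = rR_x ∩ R`.  Then `IA = rA_x ∩ A`,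
i.e. `a ∈ IA` iff `a · xⁿ ∈ rA` for some `n`. -/
theorem flat_extension_of_intersection_ideal {R A : Type*} [CommRing R] [IsDomain R]
    [CommRing A] [IsDomain A] [Algebra R A]
    (hinj : Function.Injective (algebraMap R A)) [Module.Flat R A]
    (r x : R) (hr : r ≠ 0) (hx : x ≠ 0)
    (I : Ideal R) (hI : ∀ s : R, s ∈ I ↔ ∃ (n : ℕ) (c : R), s * x ^ n = r * c) :
    ∀ a : A, a ∈ Ideal.map (algebraMap R A) I ↔
      ∃ (n : ℕ) (b : A), a * (algebraMap R A x) ^ n = algebraMap R A r * b := by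
  intro a
  constructor
  · -- forward direction
    intro ha
    have ha' : a ∈ Submodule.span A ((algebraMap R A) '' I) := by
      rwa [Ideal.map, Ideal.span] at ha
    clear ha
    induction ha' using Submodule.span_induction with
    | mem a hmem =>
      obtain ⟨s, hs, rfl⟩ := hmem
      obtain ⟨n, c, hc⟩ := (hI s).mp hs
      exact ⟨n, algebraMap R A c, by rw [← map_pow, ← map_mul, hc, map_mul]⟩
    | zero => exact ⟨0, 0, by simp⟩
    | add a b _ _ iha ihb =>
      obtain ⟨n, u, hu⟩ := iha
      obtain ⟨m, v, hv⟩ := ihb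
      refine ⟨n + m, u * algebraMap R A x ^ m + v * algebraMap R A x ^ n, ?_⟩
      rw [pow_add]
      linear_combination (algebraMap R A x ^ m) * hu + (algebraMap R A x ^ n) * hv
    | smul c a _ ih =>
      obtain ⟨n, u, hu⟩ := ih
      exact ⟨n, c * u, by rw [smul_eq_mul, mul_assoc, hu]; ring⟩
  · -- backward direction, via flatness
    rintro ⟨n, b, hab⟩
    classical
    -- the R-linear map (u, v) ↦ xⁿ u - r v
    set φ : (R × R) →ₗ[R] R :=
      x ^ n • LinearMap.fst R R R - r • LinearMap.snd R R R with hφ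
    have hexact : Function.Exact (LinearMap.ker φ).subtype φ :=
      LinearMap.exact_subtype_ker_map φ
    have hAexact := Module.Flat.lTensor_exact A hexact
    -- the element a ⊗ (1,0) + b ⊗ (0,1)
    set t0 : A ⊗[R] (R × R) := a ⊗ₜ (1, 0) + b ⊗ₜ (0, 1) with ht0
    have hker : LinearMap.lTensor A φ t0 = 0 := by
      have h1 : LinearMap.lTensor A φ t0 = a ⊗ₜ (x ^ n) + b ⊗ₜ (-r) := by
        have e1 : φ (1, 0) = x ^ n := by simp [hφ]
        have e2 : φ (0, 1) = -r := by simp [hφ]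
        simp [ht0, e1, e2]
      rw [h1]
      have : (TensorProduct.rid R A) (a ⊗ₜ (x ^ n) + b ⊗ₜ (-r)) = 0 := by
        simp only [map_add, TensorProduct.rid_tmul]
        rw [Algebra.smul_def, Algebra.smul_def, map_pow, mul_comm _ a, hab, map_neg]
        ring
      exact (TensorProduct.rid R A).injective (by simpa using this)
    obtain ⟨t, ht⟩ := (hAexact t0).mp hker
    obtain ⟨S, hS⟩ := TensorProduct.exists_finset t
    -- the map A ⊗ (R × R) → A, c ⊗ (u, v) ↦ u • c
    set ψ : A ⊗[R] (R × R) →ₗ[R] A :=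
      TensorProduct.lift (((LinearMap.lsmul R A).comp (LinearMap.fst R R R)).flip) with hψ
    have hψ0 : ψ t0 = a := by simp [hψ, ht0]
    have : a = ∑ p ∈ S, (p.2 : R × R).1 • p.1 := by
      rw [← hψ0, ← ht, hS, map_sum, map_sum]
      simp [hψ]
    rw [this]
    refine Submodule.sum_mem _ fun p _ ↦ ?_
    have hp : ((p.2 : R × R).1 : R) ∈ I := by
      have hk : φ (p.2 : R × R) = 0 := p.2.2
      simp only [hφ, LinearMap.sub_apply, LinearMap.smul_apply, LinearMap.fst_apply,
        LinearMap.snd_apply, smul_eq_mul, sub_eq_zero] at hk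
      exact (hI _).mpr ⟨n, (p.2 : R × R).2, by rw [mul_comm]; exact hk⟩
    rw [Algebra.smul_def]
    exact Ideal.mul_mem_right _ _ (Ideal.mem_map_of_mem _ hp)
end

section
/- Let R be an integral domain, r, x nonzero elements of R, and I = rR_x ∩ R (intersection inside the fraction field). If I is an invertible ideal of R, then Iⁿ = rⁿR_x ∩ R for every n ≥ 0. -/
/-- Let `R` be a domain, `r, x` nonzero, and `I = rR_x ∩ R`.  If `I` is an
invertible ideal of `R`, then `Iⁿ = rⁿR_x ∩ R` for every `n ≥ 0`. -/
theorem invertible_ideal_powers {R : Type*} [CommRing R] [IsDomain R]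
    (r x : R) (hr : r ≠ 0) (hx : x ≠ 0)
    (I : Ideal R) (hI : ∀ s : R, s ∈ I ↔ ∃ (m : ℕ) (c : R), s * x ^ m = r * c)
    (hinv : ∃ u : (FractionalIdeal (nonZeroDivisors R) (FractionRing R))ˣ,
        (u : FractionalIdeal (nonZeroDivisors R) (FractionRing R)) = I) :
    ∀ n : ℕ, ∀ s : R, s ∈ I ^ n ↔ ∃ (m : ℕ) (c : R), s * x ^ m = r ^ n * c := by
  obtain ⟨u, hu⟩ := hinv
  set K := FractionRing R
  let f := algebraMap R K
  have hf : Function.Injective f := IsFractionRing.injective R K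
  have hrI : r ∈ I := (hI r).mpr ⟨0, 1, by ring⟩
  intro n
  induction n with
  | zero =>
    intro s
    simp only [pow_zero, Ideal.one_eq_top, Submodule.mem_top, true_iff]
    exact ⟨0, s, by ring⟩
  | succ n ih =>
    intro s
    constructor
    · intro hs
      rw [pow_succ] at hs
      refine Submodule.mul_induction_on hs ?_ ?_
      · intro a ha b hb
        obtain ⟨m1, c1, h1⟩ := (ih a).mp ha
        obtain ⟨m2, c2, h2⟩ := (hI b).mp hb
        refine ⟨m1 + m2, c1 * c2, ?_⟩
        rw [pow_add, pow_succ]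
        calc a * b * (x ^ m1 * x ^ m2) = (a * x ^ m1) * (b * x ^ m2) := by ring
          _ = r ^ n * c1 * (r * c2) := by rw [h1, h2]
          _ = r ^ n * r * (c1 * c2) := by ring
      · rintro y z ⟨m1, c1, h1⟩ ⟨m2, c2, h2⟩
        refine ⟨m1 + m2, c1 * x ^ m2 + c2 * x ^ m1, ?_⟩
        rw [pow_add]
        calc (y + z) * (x ^ m1 * x ^ m2)
            = y * x ^ m1 * x ^ m2 + z * x ^ m2 * x ^ m1 := by ring
          _ = r ^ (n+1) * c1 * x ^ m2 + r ^ (n+1) * c2 * x ^ m1 := by rw [h1, h2]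
          _ = r ^ (n+1) * (c1 * x ^ m2 + c2 * x ^ m1) := by ring
    · rintro ⟨m, c, hsc⟩
      have hsI : s ∈ I := (hI s).mpr ⟨m, r ^ n * c, by rw [hsc]; ring⟩
      -- key : u⁻¹ * spanSingleton (f s) ≤ ↑(I ^ n)
      have key : (↑u⁻¹ : FractionalIdeal (nonZeroDivisors R) K) *
          FractionalIdeal.spanSingleton (nonZeroDivisors R) (f s) ≤
          ((I ^ n : Ideal R) : FractionalIdeal (nonZeroDivisors R) K) := by
        rw [FractionalIdeal.mul_le]
        intro t ht j hj
        obtain ⟨d, hd⟩ := (FractionalIdeal.mem_spanSingleton _).mp hj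
        have hone : ∀ w : R, w ∈ I → t * f w ∈ (1 : FractionalIdeal (nonZeroDivisors R) K) := by
          intro w hw
          have hwu : f w ∈ (↑u : FractionalIdeal (nonZeroDivisors R) K) := by
            rw [hu]
            exact FractionalIdeal.mem_coeIdeal_of_mem _ hw
          have := FractionalIdeal.mul_mem_mul ht hwu
          rwa [← Units.val_mul, inv_mul_cancel u, Units.val_one] at this
        obtain ⟨a, ha⟩ := (FractionalIdeal.mem_one_iff _).mp (hone r hrI)
        obtain ⟨b, hb⟩ := (FractionalIdeal.mem_one_iff _).mp (hone s hsI)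
        have hbx : b * x ^ m = r ^ n * (a * c) := by
          apply hf
          have : f (b * x ^ m) = f a * f (r ^ n * c) := by
            rw [map_mul, hb, ha]
            calc t * f s * f (x ^ m) = t * f (s * x ^ m) := by rw [map_mul]; ring
              _ = t * f (r ^ (n+1) * c) := by rw [hsc]
              _ = t * f r * f (r ^ n * c) := by
                  rw [show r ^ (n+1) * c = r * (r ^ n * c) by ring, map_mul, mul_assoc]
          rw [this, ← map_mul]
          congr 1
          ring
        have hbIn : b ∈ I ^ n := (ih b).mpr ⟨m, a * c, hbx⟩
        have : t * j = d • (t * f s) := by rw [← hd, mul_smul_comm]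
        rw [this, ← hb]
        have : f b ∈ ((I ^ n : Ideal R) : FractionalIdeal (nonZeroDivisors R) K) :=
          FractionalIdeal.mem_coeIdeal_of_mem _ hbIn
        exact Submodule.smul_mem _ d this
      have hle : FractionalIdeal.spanSingleton (nonZeroDivisors R) (f s) ≤
          ((I ^ (n+1) : Ideal R) : FractionalIdeal (nonZeroDivisors R) K) := by
        have h2 := mul_right_mono (a := (↑u : FractionalIdeal (nonZeroDivisors R) K)) key
        simp only at h2
        rwa [← mul_assoc, ← Units.val_mul, mul_inv_cancel u, Units.val_one, one_mul,
          hu, ← FractionalIdeal.coeIdeal_mul, ← pow_succ'] at h2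
      have hmem : f s ∈ ((I ^ (n+1) : Ideal R) : FractionalIdeal (nonZeroDivisors R) K) :=
        hle (FractionalIdeal.mem_spanSingleton_self _ _)
      obtain ⟨s', hs', hfs⟩ := (FractionalIdeal.mem_coeIdeal _).mp hmem
      rwa [← hf hfs]
end

section
/- Let B be an integral domain and φ a nontrivial exponential map on B with ring of invariants A = B^φ. Then A is factorially closed in B: for all nonzero a, b ∈ B, if ab ∈ A then a ∈ A and b ∈ A. -/
/-- `φ : B → B[U]` is an exponential map if evaluation at `U = 0` is the
identity and `φ_V φ_U = φ_{V+U}` (coassociativity). -/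
def IsExponentialMap {B : Type*} [CommRing B] (φ : B →+* Polynomial B) : Prop :=
  (∀ b : B, Polynomial.eval 0 (φ b) = b) ∧
  (∀ b : B, Polynomial.map φ (φ b) =
      Polynomial.eval₂ (Polynomial.C.comp Polynomial.C)
        (Polynomial.C Polynomial.X + Polynomial.X) (φ b))

/-- The ring of invariants of a nontrivial exponential map on a domain `B` is
factorially closed in `B`. -/
theorem exponential_invariants_factorially_closed {B : Type*} [CommRing B] [IsDomain B]
    (φ : B →+* Polynomial B) (hφ : IsExponentialMap φ)
    (hnt : φ ≠ (Polynomial.C : B →+* Polynomial B)) :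
    ∀ a b : B, a ≠ 0 → b ≠ 0 → φ (a * b) = Polynomial.C (a * b) →
      φ a = Polynomial.C a ∧ φ b = Polynomial.C b := by
  intro a b ha hb hab
  obtain ⟨h0, _⟩ := hφ
  have hfa : φ a ≠ 0 := fun h => ha (by rw [← h0 a, h, Polynomial.eval_zero])
  have hfb : φ b ≠ 0 := fun h => hb (by rw [← h0 b, h, Polynomial.eval_zero])
  have hmul : φ a * φ b = Polynomial.C (a * b) := by rw [← map_mul, hab]
  have hdeg : (φ a).natDegree + (φ b).natDegree = 0 := by
    rw [← Polynomial.natDegree_mul hfa hfb, hmul, Polynomial.natDegree_C]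
  have hda : (φ a).natDegree = 0 := Nat.eq_zero_of_add_eq_zero_right hdeg
  have hdb : (φ b).natDegree = 0 := Nat.eq_zero_of_add_eq_zero_left hdeg
  constructor
  · rw [Polynomial.eq_C_of_natDegree_eq_zero hda, Polynomial.coeff_zero_eq_eval_zero, h0]
  · rw [Polynomial.eq_C_of_natDegree_eq_zero hdb, Polynomial.coeff_zero_eq_eval_zero, h0]
end

section
/- Let A be a subring of a domain B with a retraction π: B → A. Suppose there is a prime element p ∈ A such that: (i) p is prime in B; (ii) B[1/p] = A[1/p][x'] is a polynomial ring in one variable over A[1/p]; (iii) ∩_{n≥0} pⁿB = (0). Then B = A[x] is a polynomial ring in one variable over A. -/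
open Polynomial

/-- If `eval₂` at `F` is bijective and `q, r` are mutually inverse under
composition, then `eval₂` at `eval₂ φ F q` is bijective. -/
private lemma eval₂_bij_of_comp {R S : Type*} [CommRing R] [CommRing S] (φ : R →+* S) {F : S}
    (hF : Function.Bijective (Polynomial.eval₂RingHom φ F)) (q r : Polynomial R)
    (hqr : q.comp r = Polynomial.X) (hrq : r.comp q = Polynomial.X) :
    Function.Bijective (Polynomial.eval₂RingHom φ (Polynomial.eval₂ φ F q)) := by
  have hcomp : Function.Bijective (fun g : Polynomial R => g.comp q) := by
    constructor
    · intro a b h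
      have := congrArg (fun t : Polynomial R => t.comp r) h
      simpa [Polynomial.comp_assoc, hqr] using this
    · intro g
      refine ⟨g.comp r, ?_⟩
      show (g.comp r).comp q = g
      rw [Polynomial.comp_assoc, hrq, Polynomial.comp_X]
  have heq : (Polynomial.eval₂RingHom φ (Polynomial.eval₂ φ F q) : Polynomial R → S)
      = (Polynomial.eval₂RingHom φ F : Polynomial R → S) ∘ (fun g => g.comp q) := by
    funext g
    simp only [Polynomial.coe_eval₂RingHom, Function.comp_apply]
    exact (Polynomial.eval₂_comp φ).symm
  rw [heq]
  exact hF.comp hcomp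

set_option maxHeartbeats 1000000 in
set_option synthInstance.maxHeartbeats 400000 in
/-- Russell–Sathaye-type criterion: if `A` is a retract of a domain `B`,
`p ∈ A` is prime in both `A` and `B`, `B[1/p]` is a polynomial ring in one
variable over `A[1/p]`, and `⋂ₙ pⁿB = (0)`, then `B` is a polynomial ring in
one variable over `A`. -/
theorem retract_polynomial_criterion {B : Type*} [CommRing B] [IsDomain B]
    (A : Subring B) (π : B →+* A) (hπ : ∀ a : A, π (a : B) = a)
    (p : A) (hpA : Prime p) (hpB : Prime (p : B))
    (hle : Submonoid.powers p ≤
      Submonoid.comap (A.subtype : A →* B) (Submonoid.powers ((p : B))))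
    (hloc : ∃ F : Localization (Submonoid.powers ((p : B))),
      Function.Bijective
        (Polynomial.eval₂RingHom
          (IsLocalization.map (Localization (Submonoid.powers ((p : B))))
            (A.subtype : A →+* B) hle :
            Localization (Submonoid.powers p) →+*
              Localization (Submonoid.powers ((p : B)))) F))
    (hint : ∀ b : B, (∀ n : ℕ, b ∈ Ideal.span {(p : B) ^ n}) → b = 0) :
    ∃ x : B, Function.Bijective (Polynomial.eval₂RingHom (A.subtype : A →+* B) x) := by
  classical
  set L := Localization (Submonoid.powers ((p : B))) with hL
  set LA := Localization (Submonoid.powers p) with hLA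
  set φ : LA →+* L := IsLocalization.map L (A.subtype : A →+* B) hle with hφ
  set j : B →+* L := algebraMap B L with hj
  set jA : A →+* LA := algebraMap A LA with hjA
  have hpB0 : (p : B) ≠ 0 := hpB.ne_zero
  have hpA0 : p ≠ 0 := hpA.ne_zero
  -- basic injectivity facts
  have hSle : Submonoid.powers ((p : B)) ≤ nonZeroDivisors B := by
    intro s hs
    obtain ⟨n, hn⟩ := hs
    exact mem_nonZeroDivisors_of_ne_zero (hn ▸ pow_ne_zero n hpB0)
  have hTle : Submonoid.powers p ≤ nonZeroDivisors A := by
    intro s hs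
    obtain ⟨n, hn⟩ := hs
    exact mem_nonZeroDivisors_of_ne_zero (hn ▸ pow_ne_zero n hpA0)
  have hjinj : Function.Injective j := IsLocalization.injective L hSle
  have hjAinj : Function.Injective jA := IsLocalization.injective LA hTle
  have hLAnt : Nontrivial LA := nontrivial_of_ne (jA 1) (jA 0) (fun h => one_ne_zero (hjAinj h))
  -- compatibility: φ ∘ jA = j ∘ subtype
  have hcompat : ∀ a : A, φ (jA a) = j (a : B) := by
    intro a
    have h := IsLocalization.map_comp (S := LA) (Q := L) hle
    exact congrArg (fun f : A →+* L => f a) h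
  -- the invariant
  set Inv : B → Prop := fun x => Function.Bijective (Polynomial.eval₂RingHom φ (j x)) with hInv
  -- step lemmas
  have hscale : ∀ (F : L) (u : LAˣ) (y : B),
      Function.Bijective (Polynomial.eval₂RingHom φ F) → j y = φ (u : LA) * F → Inv y := by
    intro F u y hx hy
    have h1 : j y = Polynomial.eval₂ φ F (Polynomial.C ((u : LA)) * Polynomial.X) := by
      simp [hy]
    show Function.Bijective (Polynomial.eval₂RingHom φ (j y))
    rw [h1]
    refine eval₂_bij_of_comp φ hx (Polynomial.C ((u : LA)) * Polynomial.X)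
      (Polynomial.C (((u⁻¹ : LAˣ) : LA)) * Polynomial.X) ?_ ?_
    · rw [Polynomial.mul_comp, Polynomial.C_comp, Polynomial.X_comp, ← mul_assoc,
        ← Polynomial.C_mul, Units.mul_inv, Polynomial.C_1, one_mul]
    · rw [Polynomial.mul_comp, Polynomial.C_comp, Polynomial.X_comp, ← mul_assoc,
        ← Polynomial.C_mul, Units.inv_mul, Polynomial.C_1, one_mul]
  have htrans : ∀ (x : B) (c : A) (y : B), Inv x → y = x - (c : B) → Inv y := by
    intro x c y hx hy
    have h1 : j y = Polynomial.eval₂ φ (j x) (Polynomial.X - Polynomial.C (jA c)) := by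
      simp [hy, hcompat c]
    show Function.Bijective (Polynomial.eval₂RingHom φ (j y))
    rw [h1]
    refine eval₂_bij_of_comp φ hx (Polynomial.X - Polynomial.C (jA c))
      (Polynomial.X + Polynomial.C (jA c)) ?_ ?_ <;>
      simp [Polynomial.sub_comp, Polynomial.add_comp, Polynomial.C_comp, Polynomial.X_comp]
  -- unit for p in LA
  have hup : ∀ k : ℕ, IsUnit (jA (p ^ k)) := fun k =>
    IsLocalization.map_units (M := Submonoid.powers p) LA ⟨p ^ k, ⟨k, rfl⟩⟩
  -- get initial x₁ ∈ B with π x₁ = 0 and Inv x₁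
  obtain ⟨F, hF⟩ := hloc
  obtain ⟨⟨b₀, s⟩, hb₀⟩ := IsLocalization.surj (Submonoid.powers ((p : B))) F
  obtain ⟨k, hk⟩ := s.2
  have hIb₀ : Inv b₀ := by
    refine hscale F ((hup k).unit) _ hF ?_
    have h1 : j b₀ = F * j ((p : B) ^ k) := by
      rw [← hb₀]
      congr 1
      exact (congrArg j hk).symm
    have h2 : φ (jA (p ^ k)) = j ((p : B) ^ k) := by
      rw [hcompat]; push_cast; ring_nf
    rw [h1, IsUnit.unit_spec, h2]
    ring
  set x₁ : B := b₀ - ((π b₀ : A) : B) with hx₁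
  have hIx₁ : Inv x₁ := htrans _ _ _ hIb₀ rfl
  have hπx₁ : π x₁ = 0 := by
    rw [hx₁, map_sub, hπ (π b₀), sub_self]
  -- descent
  have hdesc : ∀ y : B, π y = 0 → Inv y → (p : B) ∣ y →
      ∃ z : B, π z = 0 ∧ Inv z ∧ y = (p : B) * z := by
    intro y hπy hIy ⟨z, hz⟩
    have hπz : π z = 0 := by
      have : p * π z = 0 := by
        have := congrArg π hz
        rw [hπy, map_mul] at this
        have hcp : π ((p : A) : B) = p := hπ p
        rw [hcp] at this
        exact this.symm
      exact (mul_eq_zero.mp this).resolve_left hpA0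
    refine ⟨z, hπz, ?_, hz⟩
    refine hscale (j y) (((hup 1).unit)⁻¹) z hIy ?_
    have h1 : j y = j ((p : B)) * j z := by rw [hz, map_mul]
    have h2 : φ (jA (p ^ 1)) = j ((p : B)) := by
      rw [hcompat]; push_cast; ring_nf
    have hu : (((hup 1).unit : LAˣ) : LA) = jA (p ^ 1) := (hup 1).unit_spec
    have h4 : ((((hup 1).unit)⁻¹ : LAˣ) : LA) * jA (p ^ 1) = 1 := (hup 1).val_inv_mul
    have h3 : φ ((((hup 1).unit)⁻¹ : LAˣ) : LA) * j ((p : B)) = 1 := by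
      rw [← h2, ← map_mul, h4, map_one]
    calc j z = (φ ((((hup 1).unit)⁻¹ : LAˣ) : LA) * j ((p : B))) * j z := by
          rw [h3, one_mul]
      _ = φ ((((hup 1).unit)⁻¹ : LAˣ) : LA) * j y := by rw [h1, mul_assoc]
  -- find x with π x = 0, Inv x, and p ∤ x
  have hexists : ∃ x : B, π x = 0 ∧ Inv x ∧ ¬ (p : B) ∣ x := by
    by_contra hcon
    push_neg at hcon
    have hall : ∀ n : ℕ, ∃ z : B, π z = 0 ∧ Inv z ∧ x₁ = (p : B) ^ n * z := by
      intro n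
      induction n with
      | zero => exact ⟨x₁, hπx₁, hIx₁, by simp⟩
      | succ n ih =>
        obtain ⟨z, hπz, hIz, hzeq⟩ := ih
        obtain ⟨w, hπw, hIw, hweq⟩ := hdesc z hπz hIz (hcon z hπz hIz)
        exact ⟨w, hπw, hIw, by rw [hzeq, hweq, pow_succ]; ring⟩
    have hx₁0 : x₁ = 0 := by
      apply hint
      intro n
      obtain ⟨z, _, _, hzeq⟩ := hall n
      rw [Ideal.mem_span_singleton]
      exact ⟨z, hzeq⟩
    have : Function.Injective (Polynomial.eval₂RingHom φ (j x₁)) := hIx₁.1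
    have hX : (Polynomial.eval₂RingHom φ (j x₁)) Polynomial.X
        = (Polynomial.eval₂RingHom φ (j x₁)) 0 := by
      simp [hx₁0]
    exact Polynomial.X_ne_zero (this hX)
  obtain ⟨x, hπx, hIx, hpx⟩ := hexists
  have key : ∀ g : Polynomial A, j (Polynomial.eval₂ A.subtype x g)
      = Polynomial.eval₂ φ (j x) (g.map jA) := by
    intro g
    rw [Polynomial.hom_eval₂, Polynomial.eval₂_map, IsLocalization.map_comp (S := LA) (Q := L) hle]
  refine ⟨x, ?_, ?_⟩
  · -- injectivity
    intro g₁ g₂ hg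
    simp only [Polynomial.coe_eval₂RingHom] at hg ⊢
    have h1 : Polynomial.eval₂ φ (j x) (g₁.map jA) = Polynomial.eval₂ φ (j x) (g₂.map jA) := by
      rw [← key, ← key, hg]
    have h2 : g₁.map jA = g₂.map jA := by
      have := hIx.1
      simp only [Polynomial.coe_eval₂RingHom] at this
      exact this h1
    exact Polynomial.map_injective jA hjAinj h2
  · -- surjectivity
    -- key lemma: stripping one power of p
    have KL : ∀ (n : ℕ) (G : Polynomial A) (b : B), G.natDegree ≤ n →
        (p : B) * b = Polynomial.eval₂ A.subtype x G →
        ∃ H : Polynomial A, Polynomial.eval₂ A.subtype x H = b := by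
      intro n
      induction n with
      | zero =>
        intro G b hdeg heq
        have hG : G = Polynomial.C (G.coeff 0) :=
          Polynomial.eq_C_of_natDegree_eq_zero (Nat.le_zero.mp hdeg)
        rw [hG, Polynomial.eval₂_C] at heq
        simp only [Subring.coe_subtype] at heq
        have hc : G.coeff 0 = p * π b := by
          have h4 := congrArg π heq
          rw [map_mul, hπ p, hπ (G.coeff 0)] at h4
          exact h4.symm
        rw [hc] at heq
        push_cast at heq
        have hb : b = ((π b : A) : B) := mul_left_cancel₀ hpB0 heq
        refine ⟨Polynomial.C (π b), ?_⟩
        rw [Polynomial.eval₂_C]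
        simp only [Subring.coe_subtype]
        exact hb.symm
      | succ n ih =>
        intro G b hdeg heq
        -- coeff 0 of G equals p * π b
        have hc : G.coeff 0 = p * π b := by
          have h1 : π (Polynomial.eval₂ A.subtype x G) = G.coeff 0 := by
            rw [Polynomial.hom_eval₂, hπx]
            rw [Polynomial.eval₂_at_zero]
            have : (π.comp A.subtype) = RingHom.id A := RingHom.ext fun a => hπ a
            rw [this, RingHom.id_apply]
          have h2 := congrArg π heq
          rw [map_mul, hπ p, h1] at h2
          exact h2.symm
        have hsplit : Polynomial.X * G.divX + Polynomial.C (G.coeff 0) = G :=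
          Polynomial.X_mul_divX_add G
        have heq2 : (p : B) * b
            = x * Polynomial.eval₂ A.subtype x G.divX + ((G.coeff 0 : A) : B) := by
          conv_lhs => rw [heq, ← hsplit]
          rw [Polynomial.eval₂_add, Polynomial.eval₂_mul, Polynomial.eval₂_X,
            Polynomial.eval₂_C]
          simp only [Subring.coe_subtype]
        have hc' : ((G.coeff 0 : A) : B) = (p : B) * ((π b : A) : B) := by
          rw [hc]; push_cast; ring
        have heq3 : (p : B) * (b - ((π b : A) : B))
            = x * Polynomial.eval₂ A.subtype x G.divX := by
          rw [mul_sub, heq2, hc']; ring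
        have hdvd : (p : B) ∣ x * Polynomial.eval₂ A.subtype x G.divX :=
          ⟨b - ((π b : A) : B), heq3.symm⟩
        have hdvd2 : (p : B) ∣ Polynomial.eval₂ A.subtype x G.divX :=
          ((hpB.dvd_mul).mp hdvd).resolve_left hpx
        obtain ⟨d, hd⟩ := hdvd2
        have hdegd : G.divX.natDegree ≤ n := by
          have := Polynomial.natDegree_divX_eq_natDegree_tsub_one (p := G)
          omega
        obtain ⟨H, hH⟩ := ih G.divX d hdegd hd.symm
        have hbd : b - ((π b : A) : B) = x * d := by
          apply mul_left_cancel₀ hpB0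
          rw [heq3, hd]; ring
        refine ⟨Polynomial.C (π b) + Polynomial.X * H, ?_⟩
        rw [Polynomial.eval₂_add, Polynomial.eval₂_C, Polynomial.eval₂_mul,
          Polynomial.eval₂_X, hH]
        simp only [Subring.coe_subtype]
        have hb : b = ((π b : A) : B) + x * d := by rw [← hbd]; ring
        exact hb.symm
    -- stripping all powers
    have strip : ∀ (k : ℕ) (b : B),
        (∃ G : Polynomial A, Polynomial.eval₂ A.subtype x G = (p : B) ^ k * b) →
        ∃ H : Polynomial A, Polynomial.eval₂ A.subtype x H = b := by
      intro k
      induction k with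
      | zero => intro b ⟨G, hG⟩; exact ⟨G, by simpa using hG⟩
      | succ k ih =>
        intro b ⟨G, hG⟩
        have : (p : B) * ((p : B) ^ k * b) = Polynomial.eval₂ A.subtype x G := by
          rw [hG]; ring
        obtain ⟨H, hH⟩ := KL G.natDegree G ((p : B) ^ k * b) le_rfl this
        exact ih b ⟨H, hH⟩
    intro b
    obtain ⟨g, hg⟩ := hIx.2 (j b)
    simp only [Polynomial.coe_eval₂RingHom] at hg ⊢
    obtain ⟨s', hs'⟩ := IsLocalization.integerNormalization_map_to_map
      (Submonoid.powers p) g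
    set G : Polynomial A := IsLocalization.integerNormalization (Submonoid.powers p) g with hG
    obtain ⟨m, hm⟩ := s'.2
    -- (s' : A) • g = C (jA s') * g
    have hsmul : ((s' : A) • g : Polynomial LA) = Polynomial.C (jA (s' : A)) * g := by
      ext i
      rw [Polynomial.coeff_smul, Polynomial.coeff_C_mul, Algebra.smul_def]
    have h1 : j (Polynomial.eval₂ A.subtype x G) = j (((s' : A) : B) * b) := by
      rw [key G, hs', hsmul, Polynomial.eval₂_mul, Polynomial.eval₂_C, hg, map_mul, hcompat]
    have h2 : Polynomial.eval₂ A.subtype x G = ((s' : A) : B) * b := hjinj h1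
    apply strip m b
    refine ⟨G, ?_⟩
    rw [h2, ← hm]
    push_cast
    ring
end

section
/- Let B be a UFD and A a subring of B such that A is a retract of B and A = B^φ for some nontrivial exponential map φ on B. Then B is a polynomial ring in one variable over A. -/
open Polynomial

section Helpers
variable {B : Type*} [CommRing B] [IsDomain B] (φ : B →+* Polynomial B)

lemma phi_ne_zero (hφ : IsExponentialMap φ) {x : B} (hx : x ≠ 0) : φ x ≠ 0 := by
  intro h
  apply hx
  have := hφ.1 x
  rw [h] at this
  simpa using this.symm

lemma phi_eq_C_of_natDegree_eq_zero (hφ : IsExponentialMap φ) {x : B}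
    (h : (φ x).natDegree = 0) : φ x = C x := by
  obtain ⟨a, ha⟩ := Polynomial.natDegree_eq_zero.mp h
  have h2 := hφ.1 x
  rw [← ha, eval_C] at h2
  rw [← ha, h2]

/-- the leading coefficient of `φ x` is invariant -/
lemma lead_invariant (hφ : IsExponentialMap φ) (x : B) :
    φ ((φ x).leadingCoeff) = C ((φ x).leadingCoeff) := by
  rcases eq_or_ne (φ x) 0 with h | h
  · rw [h]; simp
  set p : Polynomial B := φ x with hp
  set n := p.natDegree with hn
  have key := congrArg (fun q => Polynomial.coeff q n) (hφ.2 x)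
  simp only [← hp] at key
  -- LHS
  have hL : (Polynomial.map φ p).coeff n = φ (p.coeff n) := Polynomial.coeff_map φ n
  -- RHS
  set s : Polynomial (Polynomial B) := C X + X with hs
  have hsm : s.Monic := by rw [hs, add_comm]; exact monic_X_add_C _
  have hsd : s.natDegree = 1 := by rw [hs, add_comm]; exact natDegree_X_add_C _
  have hR : (Polynomial.eval₂ (C.comp C) s p).coeff n = C (p.coeff n) := by
    rw [Polynomial.eval₂_eq_sum, Polynomial.sum_def, Polynomial.finset_sum_coeff]
    rw [Finset.sum_eq_single n]
    · simp only [RingHom.coe_comp, Function.comp_apply]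
      rw [Polynomial.coeff_C_mul]
      have : (s ^ n).coeff n = 1 := by
        have := (hsm.pow n).coeff_natDegree
        rwa [hsm.natDegree_pow, hsd, mul_one] at this
      rw [this, mul_one]
    · intro i hi hne
      have hile : i ≤ n := Polynomial.le_natDegree_of_mem_supp i hi
      have hilt : i < n := lt_of_le_of_ne hile hne
      simp only [RingHom.coe_comp, Function.comp_apply]
      rw [Polynomial.coeff_C_mul]
      have : (s ^ i).coeff n = 0 := by
        apply Polynomial.coeff_eq_zero_of_natDegree_lt
        rw [hsm.natDegree_pow, hsd, mul_one]; exact hilt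
      rw [this, mul_zero]
    · intro hns
      exact absurd (Polynomial.natDegree_mem_support_of_nonzero h) hns
  rw [hL, hR] at key
  rw [Polynomial.coeff_natDegree] at key
  exact key

end Helpers
section Dep
variable {B : Type*} [CommRing B] [IsDomain B] (φ : B →+* Polynomial B)

lemma dep_lemma (A : Subring B)
    (hφ1 : ∀ x : B, Polynomial.eval 0 (φ x) = x)
    (hlead : ∀ x : B, (φ x).leadingCoeff ∈ A ∧ φ ((φ x).leadingCoeff) = C ((φ x).leadingCoeff))
    {ι : Type} [Fintype ι] [DecidableEq ι] (m : ℕ)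
    (hcard : m + 2 ≤ Fintype.card ι) :
    ∀ (z : ι → B), (∀ i, z i ≠ 0) → (∀ i, (φ (z i)).natDegree ≤ m) →
    ∃ a : ι → B, (∀ i, a i ∈ A) ∧ (∃ i, a i ≠ 0) ∧ ∑ i, a i * z i = 0 := by
  have phi_ne : ∀ x : B, x ≠ 0 → φ x ≠ 0 := by
    intro x hx h; apply hx; have := hφ1 x; rw [h] at this; simpa using this.symm
  suffices key : ∀ (N : ℕ) (z : ι → B), (∀ i, z i ≠ 0) → (∀ i, (φ (z i)).natDegree ≤ m) →
      (∑ i, (φ (z i)).natDegree) = N →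
      ∃ a : ι → B, (∀ i, a i ∈ A) ∧ (∃ i, a i ≠ 0) ∧ ∑ i, a i * z i = 0 by
    intro z hz hdeg; exact key _ z hz hdeg rfl
  intro N
  induction N using Nat.strong_induction_on with
  | _ N ih =>
  intro z hz hdeg hN
  obtain ⟨i, j, hij, hdij⟩ := Fintype.exists_ne_map_eq_of_card_lt
    (fun i => (⟨(φ (z i)).natDegree, Nat.lt_succ_of_le (hdeg i)⟩ : Fin (m+1)))
    (by simpa using lt_of_lt_of_le (Nat.lt_succ_self (m+1)) hcard)
  have hdeq : (φ (z i)).natDegree = (φ (z j)).natDegree := congrArg Fin.val hdij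
  obtain ⟨d, hd⟩ : ∃ d, (φ (z i)).natDegree = d := ⟨_, rfl⟩
  obtain ⟨l₁, hl₁⟩ : ∃ l, (φ (z i)).leadingCoeff = l := ⟨_, rfl⟩
  obtain ⟨l₂, hl₂⟩ : ∃ l, (φ (z j)).leadingCoeff = l := ⟨_, rfl⟩
  have hl₁A : l₁ ∈ A := hl₁ ▸ (hlead (z i)).1
  have hl₂A : l₂ ∈ A := hl₂ ▸ (hlead (z j)).1
  have hl₁ne : l₁ ≠ 0 := hl₁ ▸ leadingCoeff_ne_zero.mpr (phi_ne _ (hz i))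
  have hl₂ne : l₂ ≠ 0 := hl₂ ▸ leadingCoeff_ne_zero.mpr (phi_ne _ (hz j))
  obtain ⟨w, hw⟩ : ∃ w, l₂ * z i - l₁ * z j = w := ⟨_, rfl⟩
  have hφw : φ w = C l₂ * φ (z i) - C l₁ * φ (z j) := by
    rw [← hw, map_sub, map_mul, map_mul, ← hl₁, ← hl₂, (hlead (z i)).2, (hlead (z j)).2,
      hl₁, hl₂]
  have hφwdeg : (φ w).natDegree ≤ d := by
    rw [hφw]
    refine le_trans (natDegree_sub_le _ _) ?_
    simp only [sup_le_iff]
    exact ⟨le_trans (natDegree_C_mul_le _ _) (le_of_eq hd),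
      le_trans (natDegree_C_mul_le _ _) (le_of_eq (hdeq ▸ hd))⟩
  have hcoefi : (φ (z i)).coeff d = l₁ := by rw [← hd, Polynomial.coeff_natDegree, hl₁]
  have hcoefj : (φ (z j)).coeff d = l₂ := by
    rw [← hd, hdeq, Polynomial.coeff_natDegree, hl₂]
  have hφwc : (φ w).coeff d = 0 := by
    rw [hφw, Polynomial.coeff_sub, Polynomial.coeff_C_mul, Polynomial.coeff_C_mul,
      hcoefi, hcoefj]
    ring
  rcases eq_or_ne w 0 with hw0 | hw0
  · refine ⟨fun t => if t = i then l₂ else if t = j then -l₁ else 0, ?_, ⟨i, ?_⟩, ?_⟩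
    · intro t
      dsimp only
      split
      · exact hl₂A
      split
      · exact A.neg_mem hl₁A
      · exact A.zero_mem
    · simp [hl₂ne]
    · have hout : ∀ t ∈ Finset.univ, t ∉ ({i, j} : Finset ι) →
          (if t = i then l₂ else if t = j then -l₁ else 0) * z t = 0 := by
        intro t _ ht
        simp only [Finset.mem_insert, Finset.mem_singleton, not_or] at ht
        simp [ht.1, ht.2]
      rw [← Finset.sum_subset (Finset.subset_univ ({i,j} : Finset ι)) hout]
      rw [Finset.sum_pair hij]
      rw [if_pos rfl, if_neg hij.symm, if_pos rfl]
      linear_combination hw + hw0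
  · have hwd : (φ w).natDegree < d := by
      rcases lt_or_eq_of_le hφwdeg with h | h
      · exact h
      · exfalso
        apply leadingCoeff_ne_zero.mpr (phi_ne _ hw0)
        rw [← Polynomial.coeff_natDegree, h, hφwc]
    have hdm : d ≤ m := hd ▸ hdeg i
    obtain ⟨z', hz'⟩ : ∃ z', Function.update z i w = z' := ⟨_, rfl⟩
    have hz'app : ∀ t, z' t = if t = i then w else z t := by
      intro t; rw [← hz', Function.update_apply]
    have hz'ne : ∀ t, z' t ≠ 0 := by
      intro t; rw [hz'app]; split
      · exact hw0
      · exact hz t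
    have hz'deg : ∀ t, (φ (z' t)).natDegree ≤ m := by
      intro t; rw [hz'app]; split
      · exact le_trans (le_of_lt hwd) hdm
      · exact hdeg t
    have hsum : (∑ t, (φ (z' t)).natDegree) < N := by
      have e0 : ∀ t, (φ (z' t)).natDegree =
          Function.update (fun t => (φ (z t)).natDegree) i ((φ w).natDegree) t := by
        intro t; rw [hz'app, Function.update_apply]; split <;> rfl
      have e1 : (∑ t, (φ (z' t)).natDegree)
          = (φ w).natDegree + ∑ t ∈ Finset.univ \ {i}, (φ (z t)).natDegree := by
        rw [Finset.sum_congr rfl (fun t _ => e0 t)]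
        exact Finset.sum_update_of_mem (Finset.mem_univ i) _ _
      have e2 : N = (φ (z i)).natDegree + ∑ t ∈ Finset.univ \ {i}, (φ (z t)).natDegree := by
        rw [← hN]
        have := Finset.sum_update_of_mem (Finset.mem_univ i)
          (fun t => (φ (z t)).natDegree) ((φ (z i)).natDegree)
        rw [← this]
        apply Finset.sum_congr rfl
        intro t _
        rw [Function.update_apply]
        split
        · subst t; rfl
        · rfl
      rw [e1, e2, hd]
      exact Nat.add_lt_add_right hwd _
    obtain ⟨a', ha'A, ⟨t₀, ht₀⟩, ha'sum⟩ := ih _ hsum z' hz'ne hz'deg rfl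
    refine ⟨fun t => if t = i then a' i * l₂ else if t = j then a' j - a' i * l₁ else a' t,
      ?_, ?_, ?_⟩
    · intro t
      dsimp only
      split
      · exact A.mul_mem (ha'A i) hl₂A
      split
      · exact A.sub_mem (ha'A j) (A.mul_mem (ha'A i) hl₁A)
      · exact ha'A t
    · rcases eq_or_ne (a' i) 0 with hai | hai
      · refine ⟨t₀, ?_⟩
        have ht₀i : t₀ ≠ i := by rintro rfl; exact ht₀ hai
        dsimp only
        rw [if_neg ht₀i]
        split
        · next h => subst h; rw [hai]; simpa using ht₀
        · exact ht₀
      · exact ⟨i, by dsimp only; rw [if_pos rfl]; exact mul_ne_zero hai hl₂ne⟩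
    · have key : ∑ t, ((if t = i then a' i * l₂ else if t = j then a' j - a' i * l₁ else a' t)
          * z t - a' t * z' t) = 0 := by
        have hout : ∀ t ∈ Finset.univ, t ∉ ({i, j} : Finset ι) →
            ((if t = i then a' i * l₂ else if t = j then a' j - a' i * l₁ else a' t)
            * z t - a' t * z' t) = 0 := by
          intro t _ ht
          simp only [Finset.mem_insert, Finset.mem_singleton, not_or] at ht
          rw [if_neg ht.1, if_neg ht.2, hz'app, if_neg ht.1, sub_self]
        rw [← Finset.sum_subset (Finset.subset_univ ({i,j} : Finset ι)) hout]
        rw [Finset.sum_pair hij]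
        rw [if_pos rfl, if_neg hij.symm, if_pos rfl, hz'app, hz'app, if_pos rfl,
          if_neg hij.symm, ← hw]
        ring
      rw [Finset.sum_sub_distrib, ha'sum, sub_zero] at key
      exact key

lemma algdep_lemma (A : Subring B)
    (hφ1 : ∀ x : B, Polynomial.eval 0 (φ x) = x)
    (hlead : ∀ x : B, (φ x).leadingCoeff ∈ A ∧ φ ((φ x).leadingCoeff) = C ((φ x).leadingCoeff))
    (x y : B) (hx : x ≠ 0) (hy : y ≠ 0) :
    ∃ (N : ℕ) (a : Fin N × Fin N → B), (∀ t, a t ∈ A) ∧ (∃ t, a t ≠ 0) ∧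
      ∑ t : Fin N × Fin N, a t * (x ^ (t.1 : ℕ) * y ^ (t.2 : ℕ)) = 0 := by
  classical
  have phi_ne : ∀ u : B, u ≠ 0 → φ u ≠ 0 := by
    intro u hu h; apply hu; have := hφ1 u; rw [h] at this; simpa using this.symm
  obtain ⟨s, hs⟩ : ∃ s, (φ x).natDegree + (φ y).natDegree = s := ⟨_, rfl⟩
  refine ⟨s + 2, ?_⟩
  have hcard : (s + 1) * s + 2 ≤ Fintype.card (Fin (s+2) × Fin (s+2)) := by
    simp only [Fintype.card_prod, Fintype.card_fin]
    nlinarith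
  have hdegmon : ∀ t : Fin (s+2) × Fin (s+2),
      (φ (x ^ (t.1 : ℕ) * y ^ (t.2 : ℕ))).natDegree ≤ (s+1) * s := by
    intro t
    rw [map_mul, map_pow, map_pow,
      natDegree_mul (pow_ne_zero _ (phi_ne x hx)) (pow_ne_zero _ (phi_ne y hy)),
      natDegree_pow, natDegree_pow]
    have h1 : (t.1 : ℕ) ≤ s + 1 := Nat.lt_succ_iff.mp t.1.isLt
    have h2 : (t.2 : ℕ) ≤ s + 1 := Nat.lt_succ_iff.mp t.2.isLt
    nlinarith [Nat.zero_le ((φ x).natDegree), Nat.zero_le ((φ y).natDegree)]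
  obtain ⟨a, haA, hane, hasum⟩ := dep_lemma φ A hφ1 hlead ((s+1)*s) hcard
    (fun t : Fin (s+2) × Fin (s+2) => x ^ (t.1 : ℕ) * y ^ (t.2 : ℕ))
    (fun t => mul_ne_zero (pow_ne_zero _ hx) (pow_ne_zero _ hy)) hdegmon
  exact ⟨a, haA, hane, hasum⟩

end Dep


/-- Let `B` be a UFD and `A` a subring of `B` which is a retract of `B` and is
the ring of invariants of a nontrivial exponential map on `B`.  Then `B` is a
polynomial ring in one variable over `A`. -/
theorem ufd_retract_exponential_polynomial {B : Type*} [CommRing B] [IsDomain B]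
    [UniqueFactorizationMonoid B]
    (A : Subring B) (π : B →+* A) (hπ : ∀ a : A, π (a : B) = a)
    (φ : B →+* Polynomial B) (hφ : IsExponentialMap φ)
    (hnt : φ ≠ (Polynomial.C : B →+* Polynomial B))
    (hinv : ∀ b : B, φ b = Polynomial.C b ↔ b ∈ A) :
    ∃ x : B, Function.Bijective (Polynomial.eval₂RingHom (A.subtype : A →+* B) x) := by
  classical
  have hφ1 : ∀ x : B, Polynomial.eval 0 (φ x) = x := hφ.1
  have phi_ne : ∀ u : B, u ≠ 0 → φ u ≠ 0 := by
    intro u hu h; apply hu; have := hφ1 u; rw [h] at this; simpa using this.symm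
  have hlead : ∀ x : B, (φ x).leadingCoeff ∈ A ∧
      φ ((φ x).leadingCoeff) = C ((φ x).leadingCoeff) := by
    intro x
    have h := lead_invariant φ hφ x
    exact ⟨(hinv _).mp h, h⟩
  have hcoe : ∀ x : B, x ∈ A → ((π x : B)) = x := by
    intro x hx
    have : π ((⟨x, hx⟩ : A) : B) = ⟨x, hx⟩ := hπ ⟨x, hx⟩
    simpa using congrArg (Subtype.val) this
  have hdeg0 : ∀ x : B, (φ x).natDegree = 0 → x ∈ A :=
    fun x h => (hinv x).mp (phi_eq_C_of_natDegree_eq_zero φ hφ h)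
  have hmemdeg : ∀ x : B, x ∈ A → (φ x).natDegree = 0 := by
    intro x h; rw [(hinv x).mpr h]; exact natDegree_C _
  have hIA : ∀ x : B, x ∈ A → (π x : B) = 0 → x = 0 := by
    intro x hx h0; rw [← hcoe x hx, h0]
  -- kernel ideal
  set J : Ideal B := RingHom.ker ((A.subtype).comp π) with hJdef
  have hJmem : ∀ u : B, u ∈ J ↔ (π u : B) = 0 := by
    intro u
    rw [hJdef, RingHom.mem_ker]
    rfl
  have hJprime : J.IsPrime := RingHom.ker_isPrime _
  -- a nonzero element of the kernel
  obtain ⟨b₀, hb₀⟩ : ∃ b, b ∉ A := by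
    by_contra h
    push_neg at h
    exact hnt (RingHom.ext fun b => (hinv b).mpr (h b))
  have hx₀J : (π (b₀ - (π b₀ : B)) : B) = 0 := by
    rw [map_sub, hπ, sub_self]
    rfl
  have hx₀ne : b₀ - (π b₀ : B) ≠ 0 := by
    intro h
    exact hb₀ (by rw [sub_eq_zero] at h; rw [h]; exact (π b₀).2)
  -- a prime element p in the kernel
  obtain ⟨f, hfp, u, hu⟩ := UniqueFactorizationMonoid.exists_prime_factors _ hx₀ne
  have hprodJ : f.prod ∈ J := by
    have hmem : f.prod * ↑u ∈ J := by rw [hu, hJmem]; exact hx₀J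
    rcases hJprime.mem_or_mem hmem with h | h
    · exact h
    · exfalso
      exact hJprime.ne_top (J.eq_top_of_isUnit_mem h u.isUnit)
  obtain ⟨p, hpf, hpJ⟩ := (hJprime.multiset_prod_mem_iff_exists_mem f).mp hprodJ
  have hp : Prime p := hfp p hpf
  have hpπ : (π p : B) = 0 := (hJmem p).mp hpJ
  have hpne : p ≠ 0 := hp.ne_zero
  have hpA : p ∉ A := fun h => hpne (hIA p h hpπ)
  have hdp : 1 ≤ (φ p).natDegree := by
    by_contra h
    exact hpA (hdeg0 p (by omega))
  -- the key divisibility property of the kernel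
  have final : ∀ x : B, (π x : B) = 0 → ∀ R : Polynomial B, R ≠ 0 →
      (∀ k, R.coeff k ∈ A) → p ∣ eval x R → p ∣ x := by
    intro x hxπ R hRne hRA hRdvd
    by_contra hpx
    obtain ⟨l, hl⟩ : ∃ l, R.natTrailingDegree = l := ⟨_, rfl⟩
    obtain ⟨R', hR'⟩ := X_pow_dvd_iff.mpr
      (fun d hd => coeff_eq_zero_of_lt_natTrailingDegree (p := R) (hl ▸ hd))
    have hR'0 : R'.coeff 0 = R.coeff l := by
      have := coeff_X_pow_mul R' l 0
      rw [zero_add, ← hR'] at this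
      exact this.symm
    have hR'0ne : R'.coeff 0 ≠ 0 := by
      rw [hR'0, ← hl]; exact coeff_natTrailingDegree_ne_zero.mpr hRne
    have hR'0A : R'.coeff 0 ∈ A := hR'0 ▸ hRA l
    have heval : eval x R = x ^ l * eval x R' := by
      rw [hR', eval_mul, eval_pow, eval_X]
    have hpR' : p ∣ eval x R' := by
      rw [heval] at hRdvd
      rcases hp.2.2 _ _ hRdvd with h | h
      · exact absurd (hp.dvd_of_dvd_pow h) hpx
      · exact h
    obtain ⟨R₁, hR₁⟩ := X_dvd_iff.mpr (show (R' - C (R'.coeff 0)).coeff 0 = 0 by simp)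
    have hevR' : eval x R' = R'.coeff 0 + x * eval x R₁ := by
      have := congrArg (eval x) hR₁
      rw [eval_sub, eval_C, eval_mul, eval_X] at this
      linear_combination this
    obtain ⟨W, hW⟩ := hpR'
    -- apply π
    have hπW : π (eval x R') = 0 := by
      rw [hW, map_mul]
      have : π p = 0 := by
        have := hpπ; exact_mod_cast ZeroMemClass.coe_eq_zero.mp this
      rw [this, zero_mul]
    have hπx0 : π x = 0 := ZeroMemClass.coe_eq_zero.mp hxπ
    have hπc : π (R'.coeff 0) = 0 := by
      have := congrArg π hevR'
      rw [map_add, map_mul, hπx0, zero_mul, add_zero, hπW] at this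
      exact this.symm
    exact hR'0ne (hIA _ hR'0A (by rw [hπc]; rfl))
  have hmain : ∀ x : B, (π x : B) = 0 → p ∣ x := by
    intro x hxπ
    rcases eq_or_ne x 0 with rfl | hxne
    · exact dvd_zero p
    obtain ⟨N, a, haA, ⟨t₀, ht₀⟩, hrel⟩ := algdep_lemma φ A hφ1 hlead x p hxne hpne
    have hN0 : 0 < N := t₀.1.pos
    set Q : Fin N → B := fun j => ∑ i : Fin N, a (i, j) * x ^ (i : ℕ) with hQdef
    have hrel' : ∑ j : Fin N, Q j * p ^ (j : ℕ) = 0 := by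
      rw [← hrel, Fintype.sum_prod_type_right]
      apply Finset.sum_congr rfl
      intro j _
      rw [hQdef, Finset.sum_mul]
      apply Finset.sum_congr rfl
      intro i _
      ring
    set G : Polynomial B := ∑ j : Fin N, C (Q j) * X ^ (j : ℕ) with hGdef
    have hGeval : eval p G = 0 := by
      rw [hGdef, eval_finset_sum]
      rw [← hrel']
      apply Finset.sum_congr rfl
      intro j _
      rw [eval_mul, eval_C, eval_pow, eval_X]
    have hGcoeff : ∀ (j : Fin N), G.coeff (j : ℕ) = Q j := by
      intro j
      rw [hGdef, finset_sum_coeff]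
      rw [Finset.sum_eq_single j]
      · rw [coeff_C_mul, coeff_X_pow, if_pos rfl, mul_one]
      · intro t _ htj
        rw [coeff_C_mul, coeff_X_pow, if_neg, mul_zero]
        intro h
        exact htj (Fin.ext h).symm
      · intro h; exact absurd (Finset.mem_univ _) h
    -- the column polynomials
    have mkR : ∀ j : Fin N, ∃ R : Polynomial B, (∀ k, R.coeff k ∈ A) ∧
        eval x R = Q j ∧ (∀ i : Fin N, R.coeff (i : ℕ) = a (i, j)) := by
      intro j
      refine ⟨∑ i : Fin N, C (a (i, j)) * X ^ (i : ℕ), ?_, ?_, ?_⟩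
      · intro k
        by_cases hk : k < N
        · have hco : (∑ i : Fin N, C (a (i, j)) * X ^ (i : ℕ)).coeff k = a (⟨k, hk⟩, j) := by
            rw [finset_sum_coeff, Finset.sum_eq_single (⟨k, hk⟩ : Fin N)]
            · rw [coeff_C_mul, coeff_X_pow, if_pos rfl, mul_one]
            · intro t _ hti
              rw [coeff_C_mul, coeff_X_pow, if_neg, mul_zero]
              intro h
              exact hti (Fin.ext h.symm)
            · intro h; exact absurd (Finset.mem_univ _) h
          rw [hco]; exact haA _
        · have hco : (∑ i : Fin N, C (a (i, j)) * X ^ (i : ℕ)).coeff k = 0 := by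
            rw [finset_sum_coeff]
            apply Finset.sum_eq_zero
            intro t _
            rw [coeff_C_mul, coeff_X_pow, if_neg, mul_zero]
            intro h
            exact hk (h ▸ t.isLt)
          rw [hco]; exact A.zero_mem
      · rw [eval_finset_sum, hQdef]
        apply Finset.sum_congr rfl
        intro i _
        rw [eval_mul, eval_C, eval_pow, eval_X]
      · intro i
        rw [finset_sum_coeff, Finset.sum_eq_single i]
        · rw [coeff_C_mul, coeff_X_pow, if_pos rfl, mul_one]
        · intro t _ hti
          rw [coeff_C_mul, coeff_X_pow, if_neg, mul_zero]
          intro h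
          exact hti (Fin.ext h.symm)
        · intro h; exact absurd (Finset.mem_univ _) h
    by_cases hG : G = 0
    · -- all columns evaluate to zero; use the column of t₀
      have hQ0 : Q t₀.2 = 0 := by rw [← hGcoeff t₀.2, hG, Polynomial.coeff_zero]
      obtain ⟨R, hRA, hReval, hRcoeff⟩ := mkR t₀.2
      have hRne : R ≠ 0 := by
        intro h
        apply ht₀
        have := hRcoeff t₀.1
        rw [h, Polynomial.coeff_zero] at this
        rw [← this]
      exact final x hxπ R hRne hRA (by rw [hReval, hQ0]; exact dvd_zero p)
    · -- G ≠ 0 : use the trailing coefficient of G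
      have hcoeff_hi : ∀ k, N ≤ k → G.coeff k = 0 := by
        intro k hk
        rw [hGdef, finset_sum_coeff]
        apply Finset.sum_eq_zero
        intro t _
        rw [coeff_C_mul, coeff_X_pow, if_neg, mul_zero]
        intro h
        have := t.isLt
        omega
      have hGtc : G.coeff G.natTrailingDegree ≠ 0 := coeff_natTrailingDegree_ne_zero.mpr hG
      have hm₀lt : G.natTrailingDegree < N := by
        by_contra h
        push_neg at h
        exact hGtc (hcoeff_hi _ h)
      obtain ⟨m₀, hm₀⟩ : ∃ m₀, G.natTrailingDegree = m₀ := ⟨_, rfl⟩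
      rw [hm₀] at hm₀lt hGtc
      set j₀ : Fin N := ⟨m₀, hm₀lt⟩ with hj₀
      have hQj₀ : G.coeff m₀ = Q j₀ := hGcoeff j₀
      obtain ⟨G', hG'⟩ := X_pow_dvd_iff.mpr
        (fun d hd => coeff_eq_zero_of_lt_natTrailingDegree (p := G) (hm₀ ▸ hd))
      have hG'0 : G'.coeff 0 = G.coeff m₀ := by
        have := coeff_X_pow_mul G' m₀ 0
        rw [zero_add, ← hG'] at this
        exact this.symm
      have hevalG' : eval p G' = 0 := by
        have h1 : (0:B) = p ^ m₀ * eval p G' := by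
          rw [← hGeval, hG', eval_mul, eval_pow, eval_X]
        rcases mul_eq_zero.mp h1.symm with h | h
        · exact absurd h (pow_ne_zero _ hpne)
        · exact h
      obtain ⟨G₁, hG₁⟩ := X_dvd_iff.mpr (show (G' - C (G'.coeff 0)).coeff 0 = 0 by simp)
      have hpQ : p ∣ Q j₀ := by
        refine ⟨-eval p G₁, ?_⟩
        have := congrArg (eval p) hG₁
        rw [eval_sub, eval_C, eval_mul, eval_X, hevalG'] at this
        rw [← hQj₀, ← hG'0]
        linear_combination -this
      obtain ⟨R, hRA, hReval, hRcoeff⟩ := mkR j₀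
      have hRne : R ≠ 0 := by
        intro h
        rw [h, eval_zero] at hReval
        rw [hQj₀] at hGtc
        exact hGtc hReval.symm
      exact final x hxπ R hRne hRA (by rw [hReval]; exact hpQ)
  -- Now show that B = A[p]
  refine ⟨p, ?_, ?_⟩
  · -- injectivity
    rw [injective_iff_map_eq_zero]
    intro F hF0
    by_contra hFne
    obtain ⟨k, hk⟩ : ∃ k, F.natDegree = k := ⟨_, rfl⟩
    have hcne : (φ p).leadingCoeff ≠ 0 := leadingCoeff_ne_zero.mpr (phi_ne p hpne)
    have hEF : (Polynomial.eval₂RingHom (A.subtype : A →+* B) p) F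
        = ∑ i ∈ F.support, ((F.coeff i : B)) * p ^ i := by
      rw [coe_eval₂RingHom, Polynomial.eval₂_eq_sum, Polynomial.sum_def]
      rfl
    have hφEF : φ ((Polynomial.eval₂RingHom (A.subtype : A →+* B) p) F)
        = ∑ i ∈ F.support, C ((F.coeff i : B)) * (φ p) ^ i := by
      rw [hEF, map_sum]
      apply Finset.sum_congr rfl
      intro i _
      rw [map_mul, map_pow, (hinv _).mpr (F.coeff i).2]
    have hkey : (φ ((Polynomial.eval₂RingHom (A.subtype : A →+* B) p) F)).coeff
        (k * (φ p).natDegree) = (F.coeff k : B) * (φ p).leadingCoeff ^ k := by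
      rw [hφEF, finset_sum_coeff, Finset.sum_eq_single k]
      · rw [coeff_C_mul]
        congr 1
        have h1 : ((φ p) ^ k).natDegree = k * (φ p).natDegree := natDegree_pow _ _
        rw [← h1, Polynomial.coeff_natDegree, leadingCoeff_pow]
      · intro i hi hik
        rw [coeff_C_mul]
        have h1 : i < k := lt_of_le_of_ne (hk ▸ le_natDegree_of_mem_supp i hi) hik
        have h2 : ((φ p) ^ i).natDegree < k * (φ p).natDegree := by
          rw [natDegree_pow]
          exact (Nat.mul_lt_mul_right (by omega)).mpr h1
        rw [coeff_eq_zero_of_natDegree_lt h2, mul_zero]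
      · intro h
        exact absurd (hk ▸ natDegree_mem_support_of_nonzero hFne) h
    rw [hF0, map_zero, Polynomial.coeff_zero] at hkey
    have h1 : (F.coeff k : B) ≠ 0 := by
      intro h
      apply hFne
      have : F.coeff k = 0 := ZeroMemClass.coe_eq_zero.mp h
      rw [← hk, Polynomial.coeff_natDegree] at this
      exact leadingCoeff_eq_zero.mp this
    exact absurd hkey.symm (mul_ne_zero h1 (pow_ne_zero _ hcne))
  · -- surjectivity
    intro x
    suffices h : ∀ (n : ℕ) (y : B), (φ y).natDegree ≤ n →
        ∃ F, (Polynomial.eval₂RingHom (A.subtype : A →+* B) p) F = y by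
      obtain ⟨F, hF⟩ := h _ x le_rfl
      exact ⟨F, hF⟩
    intro n
    induction n with
    | zero =>
      intro y hy
      have hyA : y ∈ A := hdeg0 y (Nat.le_zero.mp hy)
      exact ⟨C ⟨y, hyA⟩, by rw [coe_eval₂RingHom, eval₂_C]; rfl⟩
    | succ n ihn =>
      intro y hy
      by_cases hyA : y ∈ A
      · exact ⟨C ⟨y, hyA⟩, by rw [coe_eval₂RingHom, eval₂_C]; rfl⟩
      rcases eq_or_ne (y - (π y : B)) 0 with h0 | h0
      · exact absurd (by rw [sub_eq_zero] at h0; rw [h0]; exact (π y).2) hyA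
      have hyπ : (π (y - (π y : B)) : B) = 0 := by
        rw [map_sub, hπ, sub_self]
        rfl
      obtain ⟨z, hz⟩ := hmain _ hyπ
      have hzne : z ≠ 0 := by
        rintro rfl
        rw [mul_zero] at hz
        exact h0 hz
      have hdegy : (φ (y - (π y : B))).natDegree ≤ n + 1 := by
        rw [map_sub]
        refine le_trans (natDegree_sub_le _ _) ?_
        simp only [sup_le_iff]
        exact ⟨hy, le_trans (le_of_eq (hmemdeg _ (π y).2)) (Nat.zero_le _)⟩
      have hdegz : (φ z).natDegree ≤ n := by
        have h1 : (φ (y - (π y : B))).natDegree = (φ p).natDegree + (φ z).natDegree := by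
          rw [hz, map_mul, natDegree_mul (phi_ne p hpne) (phi_ne z hzne)]
        omega
      obtain ⟨F, hF⟩ := ihn z hdegz
      refine ⟨C (π y) + X * F, ?_⟩
      rw [map_add, map_mul]
      have h1 : (Polynomial.eval₂RingHom (A.subtype : A →+* B) p) (C (π y)) = ((π y : B)) := by
        rw [coe_eval₂RingHom, eval₂_C]; rfl
      have h2 : (Polynomial.eval₂RingHom (A.subtype : A →+* B) p) X = p := by
        rw [coe_eval₂RingHom, eval₂_X]
      rw [h1, h2, hF]
      linear_combination -hz
end

section
/- Let B be a UFD containing ℚ and A a subring of B. Then A is a retract of B and A = Ker D for some nonzero locally nilpotent derivation D of B if and only if B = A[T] is a polynomial ring in one variable over A. -/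
open Polynomial

set_option linter.unusedSectionVars false

section AuxD
variable {B : Type*} [CommRing B] [IsDomain B] [Algebra ℚ B] (D : Derivation ℤ B B)


lemma charZero_B : CharZero B := charZero_of_injective_algebraMap (algebraMap ℚ B).injective

lemma D_ratCast (r : ℚ) : D (algebraMap ℚ B r) = 0 := by
  haveI : CharZero B := charZero_B
  have hden : (algebraMap ℚ B r) * (r.den : B) = (r.num : B) := by
    have : ((r.den : B) : B) = algebraMap ℚ B (r.den : ℚ) := by rw [map_natCast]
    rw [this, ← map_mul, Rat.mul_den_eq_num, map_intCast]
  have h := congrArg D hden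
  rw [D.leibniz, smul_eq_mul, smul_eq_mul] at h
  simp only [Derivation.map_natCast, Derivation.map_intCast, mul_zero, zero_add] at h
  rcases mul_eq_zero.1 h with h | h
  · exact absurd (Nat.cast_eq_zero.1 h) r.den_nz
  · exact h

lemma D_qsmul (r : ℚ) (x : B) : D (r • x) = r • D x := by
  rw [Algebra.smul_def, D.leibniz, smul_eq_mul, smul_eq_mul, D_ratCast, mul_zero, add_zero,
    Algebra.smul_def]

lemma iter_qsmul (n : ℕ) (r : ℚ) (x : B) : (⇑D)^[n] (r • x) = r • (⇑D)^[n] x := by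
  induction n with
  | zero => rfl
  | succ n ih => rw [Function.iterate_succ_apply', ih, D_qsmul, Function.iterate_succ_apply']

lemma iter_nsmul (n : ℕ) (k : ℕ) (x : B) : (⇑D)^[n] (k • x) = k • (⇑D)^[n] x := by
  induction n with
  | zero => rfl
  | succ n ih => rw [Function.iterate_succ_apply', ih, map_nsmul, Function.iterate_succ_apply']

lemma iter_const_mul {a : B} (ha : D a = 0) (x : B) (n : ℕ) :
    (⇑D)^[n] (a * x) = a * (⇑D)^[n] x := by
  induction n with
  | zero => rfl
  | succ n ih =>
    rw [Function.iterate_succ_apply', ih, D.leibniz, smul_eq_mul, smul_eq_mul, ha, mul_zero,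
      add_zero, Function.iterate_succ_apply']

lemma iter_zero_mono {b : B} {n m : ℕ} (h : (⇑D)^[n] b = 0) (hnm : n ≤ m) : (⇑D)^[m] b = 0 := by
  obtain ⟨k, rfl⟩ := Nat.exists_eq_add_of_le hnm
  rw [add_comm, Function.iterate_add_apply, h]
  simp

lemma iter_binom (b c : B) (k : ℕ) : (⇑D)^[k] (b * c) =
    ∑ i ∈ Finset.range (k + 1), k.choose i • ((⇑D)^[i] b * (⇑D)^[k - i] c) := by
  induction k with
  | zero => simp
  | succ k ih =>
    rw [Function.iterate_succ_apply', ih, map_sum]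
    have step : ∀ i ∈ Finset.range (k + 1),
        D (k.choose i • ((⇑D)^[i] b * (⇑D)^[k - i] c)) =
        k.choose i • ((⇑D)^[i + 1] b * (⇑D)^[k - i] c)
          + k.choose i • ((⇑D)^[i] b * (⇑D)^[k + 1 - i] c) := by
      intro i hi
      have hik := Finset.mem_range.1 hi
      rw [map_nsmul, D.leibniz, smul_eq_mul, smul_eq_mul, smul_add]
      have h1 : (⇑D)^[i] b * D ((⇑D)^[k - i] c) = (⇑D)^[i] b * (⇑D)^[k + 1 - i] c := by
        rw [← Function.iterate_succ_apply' D (k - i) c]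
        congr 2
        omega
      have h2 : (⇑D)^[k - i] c * D ((⇑D)^[i] b) = (⇑D)^[i + 1] b * (⇑D)^[k - i] c := by
        rw [← Function.iterate_succ_apply' D i b, mul_comm]
      rw [h1, h2, add_comm]
    rw [Finset.sum_congr rfl step, Finset.sum_add_distrib]
    set t : ℕ → B := fun i => (⇑D)^[i] b * (⇑D)^[k + 1 - i] c with ht
    have hS1 : ∑ i ∈ Finset.range (k + 1), k.choose i • ((⇑D)^[i + 1] b * (⇑D)^[k - i] c)
        = ∑ i ∈ Finset.range (k + 1), k.choose i • t (i + 1) := by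
      apply Finset.sum_congr rfl
      intro i hi
      have hik := Finset.mem_range.1 hi
      simp only [ht]
      congr 3
      omega
    have hS2 : ∑ i ∈ Finset.range (k + 1), k.choose i • ((⇑D)^[i] b * (⇑D)^[k + 1 - i] c)
        = ∑ i ∈ Finset.range (k + 1), k.choose i • t i := rfl
    rw [hS1, hS2]
    have target : ∑ i ∈ Finset.range (k + 2), (k + 1).choose i • t i
        = t 0 + ∑ i ∈ Finset.range (k + 1), (k + 1).choose (i + 1) • t (i + 1) := by
      rw [Finset.sum_range_succ']
      simp [add_comm]
    have key : ∑ i ∈ Finset.range (k + 1), (k + 1).choose (i + 1) • t (i + 1)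
        = ∑ i ∈ Finset.range (k + 1), (k.choose i • t (i + 1) + k.choose (i + 1) • t (i + 1)) := by
      apply Finset.sum_congr rfl
      intro i _
      rw [Nat.choose_succ_succ, add_smul]
    have split2 : t 0 + ∑ i ∈ Finset.range (k + 1), k.choose (i + 1) • t (i + 1)
        = ∑ i ∈ Finset.range (k + 1), k.choose i • t i := by
      have h3 := Finset.sum_range_succ' (fun i => k.choose i • t i) (k + 1)
      rw [Finset.sum_range_succ, Nat.choose_succ_self, zero_smul, add_zero] at h3
      rw [h3, Nat.choose_zero_right, one_smul]
      exact add_comm _ _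
    show _ = ∑ i ∈ Finset.range (k + 2), (k + 1).choose i • t i
    rw [target, key, Finset.sum_add_distrib, ← split2]
    abel

lemma iter_pow {s g : B} (hs : D s = g) (hg : D g = 0) :
    ∀ j k : ℕ, j ≤ k → (⇑D)^[j] (s ^ k) = (k.descFactorial j) • (g ^ j * s ^ (k - j)) := by
  intro j
  induction j with
  | zero => intro k _; simp
  | succ j ih =>
    intro k hjk
    obtain ⟨k, rfl⟩ : ∃ m, k = m + 1 := ⟨k - 1, by omega⟩
    rw [Function.iterate_succ_apply]
    have hpow : D (s ^ (k + 1)) = (k + 1) • (s ^ k * g) := by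
      rw [D.leibniz_pow, hs]
      simp [smul_eq_mul, mul_comm]
    rw [hpow, iter_nsmul, mul_comm (s ^ k) g, iter_const_mul D hg, ih k (by omega),
      Nat.succ_descFactorial_succ, mul_smul, mul_smul_comm]
    simp only [Nat.succ_sub_succ]
    congr 2
    ring


lemma iter_map_zero (k : ℕ) : (⇑D)^[k] (0 : B) = 0 := Function.iterate_fixed (map_zero D) k

lemma fc_lemma (hlnd : ∀ b : B, ∃ n, (⇑D)^[n] b = 0) {b c : B} (hne : b * c ≠ 0)
    (h : D (b * c) = 0) : D b = 0 := by
  classical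
  haveI : CharZero B := charZero_B
  have hb0 : b ≠ 0 := fun h' => hne (by rw [h', zero_mul])
  have hc0 : c ≠ 0 := fun h' => hne (by rw [h', mul_zero])
  have hex : ∀ x : B, ∃ n, (⇑D)^[n + 1] x = 0 := by
    intro x
    obtain ⟨n, hn⟩ := hlnd x
    exact ⟨n, iter_zero_mono D hn (Nat.le_succ n)⟩
  have hminb : ∀ x : B, x ≠ 0 → ∃ m, (⇑D)^[m + 1] x = 0 ∧ (⇑D)^[m] x ≠ 0 := by
    intro x hx
    refine ⟨Nat.find (hex x), Nat.find_spec (hex x), ?_⟩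
    rcases Nat.eq_zero_or_pos (Nat.find (hex x)) with h0 | h0
    · rw [h0]; exact hx
    · have hlt : Nat.find (hex x) - 1 < Nat.find (hex x) := by omega
      have hmin := Nat.find_min (hex x) hlt
      intro hcon
      apply hmin
      have heq : Nat.find (hex x) - 1 + 1 = Nat.find (hex x) := by omega
      rw [heq]
      exact hcon
  obtain ⟨m, hm, hm'⟩ := hminb b hb0
  obtain ⟨n, hn, hn'⟩ := hminb c hc0
  have key : (⇑D)^[m + n] (b * c) = (m + n).choose m • ((⇑D)^[m] b * (⇑D)^[n] c) := by
    rw [iter_binom]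
    rw [Finset.sum_eq_single_of_mem m (Finset.mem_range.2 (by omega))]
    · have heq : m + n - m = n := by omega
      rw [heq]
    · intro i hi hne'
      rcases Nat.lt_or_ge i m with h' | h'
      · have hz : (⇑D)^[m + n - i] c = 0 := iter_zero_mono D hn (by omega)
        rw [hz, mul_zero, smul_zero]
      · have h'' : m < i := by omega
        have hz : (⇑D)^[i] b = 0 := iter_zero_mono D hm (by omega)
        rw [hz, zero_mul, smul_zero]
  rcases Nat.eq_zero_or_pos m with h0 | h0
  · rw [h0] at hm
    simpa using hm
  · exfalso
    have hzero : (⇑D)^[m + n] (b * c) = 0 := by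
      obtain ⟨k, hk⟩ : ∃ k, m + n = k + 1 := ⟨m + n - 1, by omega⟩
      rw [hk, Function.iterate_succ_apply, h, iter_map_zero]
    rw [key] at hzero
    have h1 : ((⇑D)^[m] b * (⇑D)^[n] c) ≠ 0 := mul_ne_zero hm' hn'
    have h2 : (((m + n).choose m : ℕ) : B) ≠ 0 := by
      rw [Nat.cast_ne_zero]
      exact Nat.ne_of_gt (Nat.choose_pos (by omega))
    rw [nsmul_eq_mul] at hzero
    exact (mul_ne_zero h2 h1) hzero


lemma iter_sub (D : Derivation ℤ B B) (x y : B) (k : ℕ) : (⇑D)^[k] (x - y) = (⇑D)^[k] x - (⇑D)^[k] y := by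
  induction k with
  | zero => rfl
  | succ k ih => rw [Function.iterate_succ_apply', ih, map_sub,
      Function.iterate_succ_apply', Function.iterate_succ_apply']

end AuxD

private theorem fwd {B : Type*} [CommRing B] [IsDomain B] [UniqueFactorizationMonoid B] [Algebra ℚ B]
    (A : Subring B) (π : B →+* A) (hπ : ∀ a : A, π (a : B) = a)
    (D : Derivation ℤ B B) (hD0 : D ≠ 0) (hlnd : ∀ b : B, ∃ n : ℕ, (⇑D)^[n] b = 0)
    (hker : ∀ b : B, D b = 0 ↔ b ∈ A) :
    ∃ x : B, Function.Bijective (Polynomial.eval₂RingHom (A.subtype : A →+* B) x) := by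
  classical
  haveI : CharZero B := charZero_B
  set π' : B →+* B := A.subtype.comp π with hπ'def
  have hπ'A : ∀ b : B, π' b ∈ A := fun b => (π b).2
  have hπ'fix : ∀ b : B, b ∈ A → π' b = b := by
    intro b hb
    have := hπ ⟨b, hb⟩
    simpa [hπ'def] using congrArg (A.subtype) this
  -- factorial closedness
  have fc : ∀ b c : B, b * c ≠ 0 → b * c ∈ A → b ∈ A :=
    fun b c hne hbc => (hker b).1 (fc_lemma D hlnd hne ((hker _).2 hbc))
  have divA : ∀ w : B, w ∈ A → w ≠ 0 → ∀ c : B, c ∣ w → c ∈ A := by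
    rintro w hwA hw0 c ⟨d, rfl⟩
    exact fc c d hw0 hwA
  -- existence of a local slice
  obtain ⟨b₀, hb₀⟩ : ∃ b, D b ≠ 0 := by
    by_contra hcon
    push_neg at hcon
    exact hD0 (by ext b; simpa using hcon b)
  have hnf : ∃ n, (⇑D)^[n] b₀ = 0 := hlnd b₀
  obtain ⟨k₀, hk₀⟩ : ∃ k, Nat.find hnf = k + 2 := by
    refine ⟨Nat.find hnf - 2, ?_⟩
    have h2 : 2 ≤ Nat.find hnf := by
      by_contra hlt
      push_neg at hlt
      interval_cases h : Nat.find hnf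
      · have := Nat.find_spec hnf
        rw [h] at this
        simp at this
        exact hb₀ (by rw [this, map_zero])
      · have := Nat.find_spec hnf
        rw [h] at this
        simpa using hb₀ this
    omega
  set r : B := (⇑D)^[k₀] b₀ with hrdef
  have hDr : D r ≠ 0 := by
    have hlt : k₀ + 1 < Nat.find hnf := by omega
    have := Nat.find_min hnf hlt
    rw [hrdef, ← Function.iterate_succ_apply' D k₀ b₀]
    exact this
  have hDDr : D (D r) = 0 := by
    have := Nat.find_spec hnf
    rw [hk₀] at this
    rw [hrdef, ← Function.iterate_succ_apply' D k₀ b₀, ← Function.iterate_succ_apply' D (k₀+1) b₀]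
    exact this
  have hg₀A : D r ∈ A := (hker _).1 hDDr
  -- minimal slice
  set S : Set B := {g | ∃ s, D s = g ∧ g ≠ 0 ∧ g ∈ A ∧ π' s = 0} with hSdef
  have hS0 : S.Nonempty := by
    refine ⟨D r, r - π' r, ?_, hDr, hg₀A, ?_⟩
    · rw [map_sub, (hker _).2 (hπ'A r), sub_zero]
    · rw [map_sub, hπ'fix _ (hπ'A r), sub_self]
  obtain ⟨g, hgS, hmin⟩ := (wellFounded_dvdNotUnit (α := B)).has_min S hS0
  obtain ⟨s, hsD, hg0, hgA, hπs⟩ := hgS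
  have hDgg : D g = 0 := (hker g).2 hgA
  have hs0 : s ≠ 0 := fun h => hg0 (by rw [← hsD, h, map_zero])
  -- no prime factor of g divides s
  have hqs : ∀ q : B, Prime q → q ∣ g → ¬ q ∣ s := by
    rintro q hq hqg ⟨u, rfl⟩
    have hqA : q ∈ A := divA g hgA hg0 q hqg
    have hDq : D q = 0 := (hker q).2 hqA
    have hgqu : g = q * D u := by
      rw [← hsD, D.leibniz, smul_eq_mul, smul_eq_mul, hDq, mul_zero, add_zero]
    have hDu0 : D u ≠ 0 := fun h => hg0 (by rw [hgqu, h, mul_zero])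
    have hDuA : D u ∈ A := by
      apply (hker _).1
      have hDg0 : D g = 0 := (hker g).2 hgA
      have hD2 : q * D (D u) = 0 := by
        have := congrArg D hgqu
        rw [hDg0, D.leibniz, smul_eq_mul, smul_eq_mul, hDq, mul_zero, add_zero] at this
        exact this.symm
      exact (mul_eq_zero.1 hD2).resolve_left hq.ne_zero
    have hπu : π' u = 0 := by
      have hqu : q * π' u = 0 := by
        rw [← hπ'fix q hqA, ← map_mul, hπs]
      exact (mul_eq_zero.1 hqu).resolve_left hq.ne_zero
    exact hmin (D u) ⟨u, rfl, hDu0, hDuA, hπu⟩ ⟨hDu0, q, hq.not_unit, by rw [hgqu]; ring⟩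
  -- the evaluation map
  set E : Polynomial A →+* B := Polynomial.eval₂RingHom (A.subtype : A →+* B) s with hEdef
  have hEC : ∀ a : A, E (Polynomial.C a) = (a : B) := fun a => by
    simp [hEdef, Polynomial.coe_eval₂RingHom]
  have hEX : E Polynomial.X = s := by simp [hEdef, Polynomial.coe_eval₂RingHom]
  have hπ'E : ∀ p : Polynomial A, π' (E p) = ((p.coeff 0 : A) : B) := by
    intro p
    have hcomp : π'.comp (A.subtype : A →+* B) = A.subtype := by
      ext a
      exact hπ'fix _ a.2
    rw [hEdef]
    show π' (Polynomial.eval₂ A.subtype s p) = _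
    rw [Polynomial.hom_eval₂, hcomp, hπs, Polynomial.eval₂_at_zero]
    rfl
  have hEsplit : ∀ p : Polynomial A, E p = E p.divX * s + ((p.coeff 0 : A) : B) := by
    intro p
    conv_lhs => rw [← Polynomial.divX_mul_X_add p]
    rw [map_add, map_mul, hEX, hEC]
  -- Lemma A: coefficientwise divisibility
  have lemA : ∀ q : B, Prime q → q ∈ A → ¬(q ∣ s) → ∀ n : ℕ, ∀ p : Polynomial A,
      p.natDegree ≤ n → q ∣ E p → ∃ p' : Polynomial A, E p = q * E p' := by
    intro q hq hqA hqsn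
    have hdivA : ∀ a : A, q ∣ (a : B) → ∃ c : A, (a : B) = q * (c : B) := by
      rintro a ⟨d, hd⟩
      by_cases ha : (a : B) = 0
      · exact ⟨0, by simp [ha]⟩
      · have hdA : d ∈ A := divA (a : B) a.2 ha d ⟨q, by rw [hd]; ring⟩
        exact ⟨⟨d, hdA⟩, hd⟩
    intro n
    induction n with
    | zero =>
      intro p hdeg hdvd
      have hp : p = Polynomial.C (p.coeff 0) := eq_C_of_natDegree_eq_zero (Nat.le_zero.1 hdeg)
      have hq0 : q ∣ ((p.coeff 0 : A) : B) := by
        rw [hp, hEC] at hdvd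
        exact hdvd
      obtain ⟨c, hc⟩ := hdivA _ hq0
      refine ⟨Polynomial.C c, ?_⟩
      rw [hp, hEC, hEC, hc]
    | succ n ih =>
      intro p hdeg hdvd
      have hco : q ∣ ((p.coeff 0 : A) : B) := by
        obtain ⟨y, hy⟩ := hdvd
        refine ⟨π' y, ?_⟩
        rw [← hπ'E p, hy, map_mul, hπ'fix q hqA]
      obtain ⟨c₀, hc₀⟩ := hdivA _ hco
      have hqd : q ∣ E p.divX * s := by
        have heq : E p - ((p.coeff 0 : A) : B) = E p.divX * s := by rw [hEsplit p]; ring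
        rw [← heq]
        exact dvd_sub hdvd hco
      have hqd' : q ∣ E p.divX := (hq.dvd_or_dvd hqd).resolve_right hqsn
      have hdeg' : p.divX.natDegree ≤ n := by
        rw [Polynomial.natDegree_divX_eq_natDegree_tsub_one]
        omega
      obtain ⟨p₁, hp₁⟩ := ih p.divX hdeg' hqd'
      refine ⟨p₁ * Polynomial.X + Polynomial.C c₀, ?_⟩
      rw [hEsplit p, hp₁, map_add, map_mul, hEX, hEC, hc₀]
      ring
  -- Lemma B : dividing out elements of A whose primes divide g
  have lemB : ∀ w : B, w ∈ A → w ≠ 0 → (∀ q : B, Prime q → q ∣ w → q ∣ g) →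
      ∀ b : B, (∃ p, E p = w * b) → ∃ p, E p = b := by
    intro w
    refine (wellFounded_dvdNotUnit (α := B)).induction
      (C := fun w => w ∈ A → w ≠ 0 → (∀ q : B, Prime q → q ∣ w → q ∣ g) →
        ∀ b : B, (∃ p, E p = w * b) → ∃ p, E p = b) w ?_
    rintro x ih hxA hx0 hpr b ⟨p, hp⟩
    by_cases hu : IsUnit x
    · obtain ⟨u, rfl⟩ := hu
      have hinvA : ((u⁻¹ : Bˣ) : B) ∈ A := divA 1 (one_mem A) one_ne_zero _ ⟨(u : B), by simp⟩
      refine ⟨Polynomial.C ⟨((u⁻¹ : Bˣ) : B), hinvA⟩ * p, ?_⟩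
      rw [map_mul, hEC, hp, ← mul_assoc]
      simp
    · obtain ⟨q, hqirr, hqdvd⟩ := WfDvdMonoid.exists_irreducible_factor hu hx0
      have hq : Prime q := (UniqueFactorizationMonoid.irreducible_iff_prime).1 hqirr
      have hqg : q ∣ g := hpr q hq hqdvd
      have hqA : q ∈ A := divA g hgA hg0 q hqg
      have hqsn : ¬ q ∣ s := hqs q hq hqg
      have hqEp : q ∣ E p := by
        rw [hp]
        exact hqdvd.mul_right b
      obtain ⟨p₁, hp₁⟩ := lemA q hq hqA hqsn p.natDegree p le_rfl hqEp
      obtain ⟨x', rfl⟩ := hqdvd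
      have hx'0 : x' ≠ 0 := by rintro rfl; rw [mul_zero] at hx0; exact hx0 rfl
      have heq : x' * b = E p₁ := by
        have h2 : q * (x' * b) = q * E p₁ := by rw [← hp₁, hp]; ring
        exact mul_left_cancel₀ hq.ne_zero h2
      exact ih x' ⟨hx'0, q, hq.not_unit, mul_comm q x'⟩
        (divA (q * x') hxA hx0 x' ⟨q, mul_comm q x'⟩) hx'0
        (fun q' hq' hd => hpr q' hq' (hd.trans ⟨q, mul_comm q x'⟩)) b ⟨p₁, heq.symm⟩
  -- Claim 1: localization-free spanning
  have claim1 : ∀ n : ℕ, ∀ b : B, (⇑D)^[n + 1] b = 0 →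
      ∃ (m : ℕ) (p : Polynomial A), E p = g ^ m * b := by
    intro n
    induction n with
    | zero =>
      intro b hb
      have hbA : b ∈ A := (hker b).1 (by simpa using hb)
      exact ⟨0, Polynomial.C ⟨b, hbA⟩, by rw [hEC]; simp⟩
    | succ n ih =>
      intro b hb
      set lam : B := (((n + 1).factorial : ℚ))⁻¹ • (⇑D)^[n + 1] b with hlam
      have hDlam : D lam = 0 := by
        rw [hlam, D_qsmul, ← Function.iterate_succ_apply' D (n + 1) b, hb, smul_zero]
      have hlamA : lam ∈ A := (hker lam).1 hDlam
      have hDgpow : D (g ^ (n + 1)) = 0 := (hker _).2 (pow_mem hgA _)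
      have hfact : ((n + 1).factorial : ℚ) ≠ 0 := by
        exact_mod_cast Nat.factorial_ne_zero (n + 1)
      have hlamfact : (n + 1).factorial • lam = (⇑D)^[n + 1] b := by
        rw [hlam, ← Nat.cast_smul_eq_nsmul ℚ, smul_smul, mul_inv_cancel₀ hfact, one_smul]
      set c : B := g ^ (n + 1) * b - lam * s ^ (n + 1) with hc
      have hDc : (⇑D)^[n + 1] c = 0 := by
        rw [hc, iter_sub, iter_const_mul D hDgpow, iter_const_mul D hDlam,
          iter_pow D hsD hDgg (n + 1) (n + 1) le_rfl, Nat.descFactorial_self]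
        rw [Nat.sub_self, pow_zero, mul_one, mul_smul_comm, ← smul_mul_assoc, hlamfact]
        ring
      obtain ⟨m, p, hp⟩ := ih c hDc
      refine ⟨m + (n + 1), p + Polynomial.C (⟨g, hgA⟩ ^ m * ⟨lam, hlamA⟩) * Polynomial.X ^ (n + 1), ?_⟩
      have hEX2 : E (Polynomial.C (⟨g, hgA⟩ ^ m * ⟨lam, hlamA⟩) * Polynomial.X ^ (n + 1))
          = (g ^ m * lam) * s ^ (n + 1) := by
        rw [map_mul, hEC, map_pow, hEX]
        push_cast
        ring
      rw [map_add, hp, hEX2, hc, pow_add]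
      ring
  -- surjectivity
  have surj : Function.Surjective ⇑E := by
    intro b
    obtain ⟨n, hn⟩ := hlnd b
    obtain ⟨m, p, hp⟩ := claim1 n b (iter_zero_mono D hn (Nat.le_succ n))
    exact lemB (g ^ m) (pow_mem hgA m) (pow_ne_zero _ hg0)
      (fun q hq hdvd => hq.dvd_of_dvd_pow hdvd) b ⟨p, hp⟩
  -- injectivity
  have injA : ∀ n : ℕ, ∀ p : Polynomial A, p.natDegree ≤ n → E p = 0 → p = 0 := by
    intro n
    induction n with
    | zero =>
      intro p hdeg hEp
      have h0 : ((p.coeff 0 : A) : B) = 0 := by rw [← hπ'E p, hEp, map_zero]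
      have h0' : p.coeff 0 = 0 := by exact_mod_cast h0
      rw [eq_C_of_natDegree_eq_zero (Nat.le_zero.1 hdeg), h0', map_zero]
    | succ n ih =>
      intro p hdeg hEp
      have h0 : ((p.coeff 0 : A) : B) = 0 := by rw [← hπ'E p, hEp, map_zero]
      have h0' : p.coeff 0 = 0 := by exact_mod_cast h0
      have hE' : E p.divX * s = 0 := by
        have := hEsplit p
        rw [hEp, h0'] at this
        simpa using this.symm
      have hdx : E p.divX = 0 := by
        rcases mul_eq_zero.1 hE' with h | h
        · exact h
        · exact absurd h hs0
      have hdeg' : p.divX.natDegree ≤ n := by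
        rw [Polynomial.natDegree_divX_eq_natDegree_tsub_one]
        omega
      have hz := ih p.divX hdeg' hdx
      rw [← Polynomial.divX_mul_X_add p, hz, h0']
      simp
  have inj : Function.Injective ⇑E :=
    (injective_iff_map_eq_zero E).2 (fun p hp => injA p.natDegree p le_rfl hp)
  exact ⟨s, inj, surj⟩

private theorem bwd {B : Type*} [CommRing B] [IsDomain B] [Algebra ℚ B] (A : Subring B)
    (x : B) (hbij : Function.Bijective (Polynomial.eval₂RingHom (A.subtype : A →+* B) x)) :
    ((∃ π : B →+* A, ∀ a : A, π (a : B) = a) ∧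
      ∃ D : Derivation ℤ B B, D ≠ 0 ∧ (∀ b : B, ∃ n : ℕ, (⇑D)^[n] b = 0) ∧
        ∀ b : B, (D b = 0 ↔ b ∈ A)) := by
  haveI : CharZero B := charZero_of_injective_algebraMap (algebraMap ℚ B).injective
  let e : Polynomial A ≃+* B := RingEquiv.ofBijective _ hbij
  have he : ∀ p : Polynomial A, e p = eval₂ A.subtype x p := fun p => rfl
  have heC : ∀ a : A, e (C a) = (a : B) := by intro a; rw [he, eval₂_C]; rfl
  have heX : e X = x := by rw [he, eval₂_X]
  constructor
  · refine ⟨((Polynomial.evalRingHom (0 : A)).comp (e.symm : B →+* Polynomial A)), fun a => ?_⟩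
    have : e.symm (a : B) = C a := by rw [← heC a, e.symm_apply_apply]
    simp [this]
  · -- the derivation
    let F : B →+ B := (e : Polynomial A →+* B).toAddMonoidHom.comp
      ((Polynomial.derivative (R := A)).toAddMonoidHom.comp
        (e.symm : B →+* Polynomial A).toAddMonoidHom)
    have hF : ∀ b, F b = e (derivative (e.symm b)) := fun b => rfl
    let D : Derivation ℤ B B :=
      { toLinearMap := F.toIntLinearMap
        map_one_eq_zero' := by
          show F 1 = 0
          rw [hF]
          have : e.symm (1 : B) = 1 := by rw [← map_one e, e.symm_apply_apply]
          simp [this]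
        leibniz' := by
          intro a b
          show F (a * b) = a • F b + b • F a
          rw [hF, hF, hF, smul_eq_mul, smul_eq_mul, map_mul e.symm, derivative_mul, map_add,
            map_mul, map_mul]
          simp only [RingEquiv.apply_symm_apply]
          ring }
    have hD : ∀ b, D b = e (derivative (e.symm b)) := fun b => rfl
    have hiter : ∀ (n : ℕ) (b : B), (⇑D)^[n] b = e ((⇑derivative)^[n] (e.symm b)) := by
      intro n
      induction n with
      | zero => intro b; simp
      | succ n ih =>
        intro b
        rw [Function.iterate_succ_apply', ih, hD, e.symm_apply_apply, Function.iterate_succ_apply']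
    refine ⟨D, ?_, ?_, ?_⟩
    · intro h0
      have h1 : D x = 1 := by
        rw [hD, ← heX, e.symm_apply_apply, derivative_X, map_one]
      rw [h0] at h1
      simp only [Derivation.zero_apply] at h1
      exact zero_ne_one h1
    · intro b
      refine ⟨(e.symm b).natDegree + 1, ?_⟩
      rw [hiter, Polynomial.iterate_derivative_eq_zero (Nat.lt_succ_self _), map_zero]
    · intro b
      constructor
      · intro hb
        rw [hD] at hb
        have h0 : derivative (e.symm b) = 0 := by
          apply e.injective
          rw [hb, map_zero]
        have hdeg : (e.symm b).natDegree = 0 := natDegree_eq_zero_of_derivative_eq_zero h0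
        have : b = ((e.symm b).coeff 0 : B) := by
          rw [← heC ((e.symm b).coeff 0), ← eq_C_of_natDegree_eq_zero hdeg, e.apply_symm_apply]
        rw [this]
        exact ((e.symm b).coeff 0).2
      · intro hb
        have : e.symm b = C ⟨b, hb⟩ := by
          apply e.injective
          rw [e.apply_symm_apply, heC]
        rw [hD, this]
        simp


/-- Let `B` be a UFD containing `ℚ` and `A` a subring of `B`.  Then `A` is a
retract of `B` and `A = Ker D` for some nonzero locally nilpotent derivation
`D` of `B` if and only if `B` is a polynomial ring in one variable over `A`. -/
theorem ufd_retract_lnd_iff_polynomial {B : Type*} [CommRing B] [IsDomain B]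
    [UniqueFactorizationMonoid B] [Algebra ℚ B] (A : Subring B) :
    ((∃ π : B →+* A, ∀ a : A, π (a : B) = a) ∧
      ∃ D : Derivation ℤ B B, D ≠ 0 ∧ (∀ b : B, ∃ n : ℕ, (⇑D)^[n] b = 0) ∧
        ∀ b : B, (D b = 0 ↔ b ∈ A)) ↔
    ∃ x : B, Function.Bijective (Polynomial.eval₂RingHom (A.subtype : A →+* B) x) := by
  constructor
  · rintro ⟨⟨π, hπ⟩, D, hD0, hlnd, hker⟩
    exact fwd A π hπ D hD0 hlnd hker
  · rintro ⟨x, hbij⟩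
    exact bwd A x hbij
end

section
/- Let B be an integral domain satisfying the ascending chain condition on principal ideals, p a prime element of B, A a retract of B with retraction π: B → A. If π(p) is not a unit in A and pB ∩ A ≠ (0), then pB ∩ A = π(p)A and π(p) is a prime element of A. -/
/-- Let `B` be a domain with ACC on principal ideals, `p` a prime element of
`B`, and `A` a retract of `B` via `π`.  If `π p` is not a unit in `A` and
`pB ∩ A ≠ (0)`, then `pB ∩ A = π(p)A` and `π p` is a prime element of `A`. -/
theorem retract_prime_element {B : Type*} [CommRing B] [IsDomain B]
    (hacc : ∀ f : ℕ → B, (∀ n, Ideal.span {f n} ≤ Ideal.span {f (n + 1)}) →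
      ∃ N, ∀ n, N ≤ n → Ideal.span {f n} = Ideal.span {f N})
    (A : Subring B) (π : B →+* A) (hπ : ∀ a : A, π (a : B) = a)
    (p : B) (hp : Prime p) (hunit : ¬ IsUnit (π p))
    (hne : ∃ a : A, (a : B) ∈ Ideal.span {p} ∧ a ≠ 0) :
    (∀ a : A, (a : B) ∈ Ideal.span {p} ↔ a ∈ Ideal.span {π p}) ∧ Prime (π p) := by
  classical
  have hp0 : p ≠ 0 := hp.ne_zero
  obtain ⟨a, ha, ha0⟩ := hne
  rw [Ideal.mem_span_singleton] at ha
  obtain ⟨y0, hy0⟩ := ha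
  have ha0B : (a : B) ≠ 0 := by
    simpa using ha0
  -- key coercion fact
  have key : ∀ (x : A) (y : B), (x : B) = p * y →
      p * y = ((π p : A) : B) * ((π y : A) : B) := by
    intro x y hxy
    have h1 : π (x : B) = x := hπ x
    have h2 : π (x : B) = π p * π y := by rw [hxy, map_mul]
    have h3 : (x : A) = π p * π y := h1 ▸ h2
    have h4 : (x : B) = ((π p * π y : A) : B) := congrArg Subtype.val h3
    rw [← hxy, h4]
    push_cast
    ring
  -- π p is not a unit in B
  have hunitB : ¬ IsUnit ((π p : A) : B) := by
    rintro ⟨u, hu⟩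
    apply hunit
    refine IsUnit.of_mul_eq_one (a := π p) (π (↑u⁻¹ : B)) ?_
    have : π (((π p : A) : B) * (↑u⁻¹ : B)) = 1 := by
      rw [← hu, Units.mul_inv, map_one]
    rwa [map_mul, hπ (π p)] at this
  -- π p ≠ 0
  have hπp0 : (π p : A) ≠ 0 := by
    intro h
    apply ha0B
    have := key a y0 hy0
    rw [← hy0, h] at this
    simpa using this
  -- main claim : p ∣ π p in B
  have hdvd : p ∣ ((π p : A) : B) := by
    by_contra hnd
    -- descent step
    have step : ∀ y : B, (∃ x : A, (x : B) ≠ 0 ∧ (x : B) = p * y) →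
        ∃ y₂ : B, y = ((π p : A) : B) * y₂ ∧
          ((π y : A) : B) ≠ 0 ∧ ((π y : A) : B) = p * y₂ := by
      intro y ⟨x, hx0, hxy⟩
      have hkey := key x y hxy
      have hy0' : p * y ≠ 0 := by rw [← hxy]; exact hx0
      have hπy0 : ((π y : A) : B) ≠ 0 := by
        intro h
        rw [h, mul_zero] at hkey
        exact hy0' hkey
      have hpd : p ∣ ((π p : A) : B) * ((π y : A) : B) := ⟨y, hkey.symm⟩
      rcases hp.2.2 _ _ hpd with h | h
      · exact absurd h hnd
      obtain ⟨y₂, hy₂⟩ := h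
      refine ⟨y₂, ?_, hπy0, hy₂⟩
      have : p * y = p * (((π p : A) : B) * y₂) := by
        rw [hkey, hy₂]; ring
      exact mul_left_cancel₀ hp0 this
    -- build the sequence
    let g : ℕ → {y : B // ∃ x : A, (x : B) ≠ 0 ∧ (x : B) = p * y} := fun n =>
      Nat.rec ⟨y0, a, ha0B, hy0⟩
        (fun _ prev =>
          ⟨Classical.choose (step prev.1 prev.2),
            π prev.1,
            (Classical.choose_spec (step prev.1 prev.2)).2.1,
            (Classical.choose_spec (step prev.1 prev.2)).2.2⟩) n
    have rel : ∀ n, (g n).1 = ((π p : A) : B) * (g (n + 1)).1 := fun n =>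
      (Classical.choose_spec (step (g n).1 (g n).2)).1
    obtain ⟨N, hN⟩ := hacc (fun n => (g n).1) (fun n => by
      apply Ideal.span_singleton_le_span_singleton.mpr
      exact ⟨((π p : A) : B), by show (g n).1 = (g (n + 1)).1 * ((π p : A) : B); rw [rel n]; ring⟩)
    have hEq : Ideal.span {(g (N + 1)).1} = Ideal.span {(g N).1} :=
      hN (N + 1) (Nat.le_succ N)
    have hAssoc : Associated ((g (N + 1)).1) ((g N).1) :=
      Ideal.span_singleton_eq_span_singleton.mp hEq
    obtain ⟨u, hu⟩ := hAssoc
    have hgne : (g (N + 1)).1 ≠ 0 := by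
      obtain ⟨x, hx0, hxy⟩ := (g (N + 1)).2
      intro h
      rw [h, mul_zero] at hxy
      exact hx0 hxy
    have : (g (N + 1)).1 * ↑u = (g (N + 1)).1 * ((π p : A) : B) := by
      rw [hu, rel N]; ring
    have huπ : (↑u : B) = ((π p : A) : B) := mul_left_cancel₀ hgne this
    exact hunitB (huπ ▸ u.isUnit)
  -- now conclude
  obtain ⟨q, hq⟩ := hdvd
  have main : ∀ a : A, (a : B) ∈ Ideal.span {p} ↔ a ∈ Ideal.span {π p} := by
    intro x
    rw [Ideal.mem_span_singleton, Ideal.mem_span_singleton]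
    constructor
    · rintro ⟨y, hy⟩
      refine ⟨π y, ?_⟩
      apply Subtype.ext
      have := key x y hy
      rw [← hy] at this
      exact_mod_cast this
    · rintro ⟨c, hc⟩
      have : (x : B) = ((π p : A) : B) * (c : B) := congrArg Subtype.val hc
      exact ⟨q * (c : B), by rw [this, hq]; ring⟩
  refine ⟨main, hπp0, hunit, ?_⟩
  intro a₁ a₂ hmul
  have hB : p ∣ (a₁ : B) * (a₂ : B) := by
    obtain ⟨c, hc⟩ := hmul
    have : (a₁ : B) * (a₂ : B) = ((π p : A) : B) * (c : B) := by
      have := congrArg Subtype.val hc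
      push_cast at this
      exact_mod_cast this
    exact ⟨q * (c : B), by rw [this, hq]; ring⟩
  rcases hp.2.2 _ _ hB with h | h
  · left
    rw [← Ideal.mem_span_singleton, ← main, Ideal.mem_span_singleton]
    exact h
  · right
    rw [← Ideal.mem_span_singleton, ← main, Ideal.mem_span_singleton]
    exact h
end
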